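/- arXiv:2506.12201 — 5 statements merged into one kernel-verified Lean document; each statement's English description precedes it below -/
import Mathlib

section
/- Let d ≥ 1. Let p ∈ L²(ℝ^d) be a probability density supported in [−1/2,1/2]^d with ∫_{ℝ^d} t p(t) dt = 0 (componentwise), and let f ∈ L²(ℝ^d) be supported in [−1/2,1/2]^d with f^ft(0) = 1. Define Ψ(ω₁, ω₂) := f^ft(ω₁) · conj(f^ft(ω₂)) · p^ft(ω₁ − ω₂) for ω₁, ω₂ ∈ ℝ^d. If Ψ(ω, ω) ≠ 0 for every ω ∈ ℝ^d, then for every ω ∈ ℝ^d one has f^ft(ω) = exp( ∫₀¹ (∇₁Ψ(αω, αω) / Ψ(αω, αω)) · ω dα ), where ∇₁ denotes the gradient with respect to the first argument. -/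
open MeasureTheory Complex

noncomputable section

/-- Fourier transform `g^ft(ω) = ∫ g(t) e^{-i t·ω} dt` on `ℝ^d`. -/
def ft {d : ℕ} (g : (Fin d → ℝ) → ℂ) (ω : Fin d → ℝ) : ℂ :=
  ∫ t : Fin d → ℝ, g t * Complex.exp (-Complex.I * ((∑ j, t j * ω j : ℝ) : ℂ))

def kotL (d : ℕ) : (Fin d → ℝ) →L[ℝ] (Fin d → ℝ) →L[ℝ] ℝ :=
  (2 * Real.pi)⁻¹ • ∑ j, (ContinuousLinearMap.proj j).smulRight (ContinuousLinearMap.proj j)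

lemma kotL_apply {d : ℕ} (t w : Fin d → ℝ) :
    kotL d t w = (2 * Real.pi)⁻¹ * ∑ j, t j * w j := by
  simp [kotL, ContinuousLinearMap.sum_apply, Finset.mul_sum, smul_eq_mul]

lemma integrable_of_l2_support {d : ℕ} {g : (Fin d → ℝ) → ℝ} (hg : MemLp g 2)
    (hsupp : ∀ t : Fin d → ℝ,
      t ∉ Set.Icc (fun _ => -(1/2 : ℝ)) (fun _ => (1/2 : ℝ)) → g t = 0) :
    Integrable g := by
  set s : Set (Fin d → ℝ) := Set.Icc (fun _ => -(1/2 : ℝ)) (fun _ => (1/2 : ℝ)) with hs_def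
  have hs : IsCompact s := isCompact_Icc
  have hμs : volume s < ⊤ := hs.measure_lt_top
  have h1 : IntegrableOn g s := by
    haveI : Fact (volume s < ⊤) := ⟨hμs⟩
    exact memLp_one_iff_integrable.mp ((hg.restrict s).mono_exponent (by norm_num))
  have h2 : g = s.indicator g := by
    ext t; by_cases h : t ∈ s
    · simp [Set.indicator_of_mem h]
    · simp [Set.indicator_of_notMem h, hsupp t h]
  rw [h2]; exact h1.integrable_indicator hs.measurableSet

lemma norm_smul_integrable_of_l2_support {d : ℕ} {g : (Fin d → ℝ) → ℝ} (hg : MemLp g 2)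
    (hsupp : ∀ t : Fin d → ℝ,
      t ∉ Set.Icc (fun _ => -(1/2 : ℝ)) (fun _ => (1/2 : ℝ)) → g t = 0) :
    Integrable (fun t : Fin d → ℝ => ‖t‖ * ‖g t‖) := by
  have hint := integrable_of_l2_support hg hsupp
  refine (hint.norm.const_mul (1/2 : ℝ)).mono' ?_ ?_
  · exact (continuous_norm.aestronglyMeasurable).mul hint.norm.1
  · refine ae_of_all _ fun t => ?_
    rw [Real.norm_of_nonneg (mul_nonneg (norm_nonneg _) (norm_nonneg _))]
    by_cases h : t ∈ Set.Icc (fun _ => -(1/2 : ℝ)) (fun _ => (1/2 : ℝ))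
    · have ht : ‖t‖ ≤ 1/2 := by
        refine (pi_norm_le_iff_of_nonneg (by norm_num)).mpr fun i => ?_
        rw [Set.mem_Icc] at h
        rw [Real.norm_eq_abs, abs_le]
        exact ⟨h.1 i, h.2 i⟩
      exact mul_le_mul_of_nonneg_right ht (norm_nonneg _)
    · simp [hsupp t h]

lemma phase_eq {d : ℕ} (t w : Fin d → ℝ) :
    (Real.fourierChar (-(kotL d).toLinearMap₁₂ t w) : ℂ) =
      Complex.exp (-Complex.I * ((∑ j, t j * w j : ℝ) : ℂ)) := by
  have h : (kotL d).toLinearMap₁₂ t w = (2 * Real.pi)⁻¹ * ∑ j, t j * w j := kotL_apply t w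
  rw [Real.fourierChar_apply, h]
  congr 1
  have h2 : (2 * Real.pi) * -((2 * Real.pi)⁻¹ * ∑ j, t j * w j) = -∑ j, t j * w j := by
    field_simp
  push_cast [h2]
  ring

lemma ft_eq_fourierIntegral {d : ℕ} (g : (Fin d → ℝ) → ℂ) (ω : Fin d → ℝ) :
    ft g ω = VectorFourier.fourierIntegral Real.fourierChar volume
      (kotL d).toLinearMap₁₂ g ω := by
  rw [ft, VectorFourier.fourierIntegral]
  congr 1 with t
  rw [Circle.smul_def, phase_eq, smul_eq_mul, mul_comm]

def kotD {d : ℕ} (g : (Fin d → ℝ) → ℂ) (ω : Fin d → ℝ) : (Fin d → ℝ) →L[ℝ] ℂ :=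
  VectorFourier.fourierIntegral Real.fourierChar volume (kotL d).toLinearMap₁₂
    (VectorFourier.fourierSMulRight (kotL d) g) ω

lemma kot_integrable_fourierSMulRight {d : ℕ} {g : (Fin d → ℝ) → ℂ}
    (hg : Integrable g) (hg' : Integrable (fun t : Fin d → ℝ => ‖t‖ * ‖g t‖)) :
    Integrable (VectorFourier.fourierSMulRight (kotL d) g) := by
  refine (hg'.const_mul (2 * Real.pi * ‖kotL d‖)).mono' hg.1.fourierSMulRight
    (ae_of_all _ fun v => ?_)
  calc ‖VectorFourier.fourierSMulRight (kotL d) g v‖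
      ≤ 2 * Real.pi * ‖kotL d‖ * ‖v‖ * ‖g v‖ :=
        VectorFourier.norm_fourierSMulRight_le _ _ _
    _ = 2 * Real.pi * ‖kotL d‖ * (‖v‖ * ‖g v‖) := by ring

lemma kot_hasFDerivAt {d : ℕ} {g : (Fin d → ℝ) → ℂ}
    (hg : Integrable g) (hg' : Integrable (fun t : Fin d → ℝ => ‖t‖ * ‖g t‖))
    (ω : Fin d → ℝ) : HasFDerivAt (ft g) (kotD g ω) ω := by
  have h : ft g = VectorFourier.fourierIntegral Real.fourierChar volume
      (kotL d).toLinearMap₁₂ g := funext (ft_eq_fourierIntegral g)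
  rw [h]
  exact VectorFourier.hasFDerivAt_fourierIntegral (kotL d) hg hg' ω

lemma kot_continuous_D {d : ℕ} {g : (Fin d → ℝ) → ℂ}
    (hg : Integrable g) (hg' : Integrable (fun t : Fin d → ℝ => ‖t‖ * ‖g t‖)) :
    Continuous (kotD g) :=
  VectorFourier.fourierIntegral_continuous Real.continuous_fourierChar
    (by apply (kotL d).continuous₂) (kot_integrable_fourierSMulRight hg hg')

lemma kotD_apply {d : ℕ} {g : (Fin d → ℝ) → ℂ}
    (hg : Integrable g) (hg' : Integrable (fun t : Fin d → ℝ => ‖t‖ * ‖g t‖))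
    (ω v : Fin d → ℝ) :
    kotD g ω v = ∫ t : Fin d → ℝ,
      Complex.exp (-Complex.I * ((∑ j, t j * ω j : ℝ) : ℂ)) *
        ((-Complex.I * ((∑ j, t j * v j : ℝ) : ℂ)) * g t) := by
  rw [kotD, VectorFourier.fourierIntegral_continuousLinearMap_apply
    Real.continuous_fourierChar (kot_integrable_fourierSMulRight hg hg'),
    VectorFourier.fourierIntegral]
  congr 1 with t
  rw [Circle.smul_def, phase_eq]
  congr 1
  rw [VectorFourier.fourierSMulRight_apply, kotL_apply]
  have hπ : (Real.pi : ℂ) ≠ 0 := Complex.ofReal_ne_zero.mpr Real.pi_ne_zero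
  rw [smul_eq_mul, Complex.real_smul]
  push_cast
  field_simp

lemma ft_ofReal_zero {d : ℕ} (g : (Fin d → ℝ) → ℝ) :
    ft (fun t => (g t : ℂ)) 0 = ((∫ t : Fin d → ℝ, g t : ℝ) : ℂ) := by
  rw [ft]
  simp only [Pi.zero_apply, mul_zero, Finset.sum_const_zero, Complex.ofReal_zero,
    Complex.exp_zero, mul_one]
  exact integral_ofReal

lemma kotD_zero_single {d : ℕ} {g : (Fin d → ℝ) → ℝ}
    (hg : Integrable (fun t => (g t : ℂ)))
    (hg' : Integrable (fun t : Fin d → ℝ => ‖t‖ * ‖(g t : ℂ)‖)) (j : Fin d) :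
    kotD (fun t => (g t : ℂ)) 0 (Pi.single j 1) =
      -Complex.I * ((∫ t : Fin d → ℝ, t j * g t : ℝ) : ℂ) := by
  rw [kotD_apply hg hg' 0 (Pi.single j 1)]
  have h1 : ∀ t : Fin d → ℝ,
      Complex.exp (-Complex.I * ((∑ i, t i * (0 : Fin d → ℝ) i : ℝ) : ℂ)) *
        ((-Complex.I * ((∑ i, t i * (Pi.single j 1 : Fin d → ℝ) i : ℝ) : ℂ)) * (g t : ℂ)) =
      -Complex.I * ((t j * g t : ℝ) : ℂ) := by
    intro t
    have hs0 : (∑ i, t i * (0 : Fin d → ℝ) i) = 0 := by simp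
    have hsj : (∑ i, t i * (Pi.single j 1 : Fin d → ℝ) i) = t j := by
      simp [Pi.single_apply, mul_ite]
    rw [hs0, hsj]
    push_cast
    simp
    ring
  simp_rw [h1]
  rw [integral_const_mul]
  exact congrArg _ integral_ofReal


/-- Gradient of a `ℂ`-valued function on `ℝ^d` (equals `∇Re ξ + i ∇Im ξ` componentwise). -/
def grad {d : ℕ} (ξ : (Fin d → ℝ) → ℂ) (ω : Fin d → ℝ) : Fin d → ℂ :=
  fun j => fderiv ℝ ξ ω (Pi.single j 1)

/-- Dot product `u·v` of a real vector with a complex vector. -/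
def rcDot {d : ℕ} (u : Fin d → ℝ) (v : Fin d → ℂ) : ℂ :=
  ∑ j, (u j : ℂ) * v j

/-- **Identification (Kotlarski's formula for functional MRA).**
If `p ∈ L²` is a centered probability density supported in `[-1/2,1/2]^d`, `f ∈ L²` is
supported in `[-1/2,1/2]^d` with `f^ft(0) = 1`, and
`Ψ(ω₁,ω₂) = f^ft(ω₁) conj(f^ft(ω₂)) p^ft(ω₁-ω₂)` is nonvanishing on the diagonal,
then `f^ft(ω) = exp (∫₀¹ (∇₁Ψ(αω,αω)/Ψ(αω,αω)) · ω dα)`. -/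
theorem kotlarski_identification
    (d : ℕ) (hd : 1 ≤ d)
    (p f : (Fin d → ℝ) → ℝ)
    (hp_meas : Measurable p) (hpL2 : MemLp p 2)
    (hp_nonneg : ∀ t, 0 ≤ p t)
    (hp_int : ∫ t : Fin d → ℝ, p t = 1)
    (hp_supp : ∀ t : Fin d → ℝ,
      t ∉ Set.Icc (fun _ => -(1/2 : ℝ)) (fun _ => (1/2 : ℝ)) → p t = 0)
    (hp_centered : ∀ j : Fin d, ∫ t : Fin d → ℝ, t j * p t = 0)
    (hf_meas : Measurable f) (hfL2 : MemLp f 2)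
    (hf_supp : ∀ t : Fin d → ℝ,
      t ∉ Set.Icc (fun _ => -(1/2 : ℝ)) (fun _ => (1/2 : ℝ)) → f t = 0)
    (hf0 : ft (fun t => (f t : ℂ)) 0 = 1)
    (Ψ : (Fin d → ℝ) → (Fin d → ℝ) → ℂ)
    (hΨ : ∀ ω₁ ω₂ : Fin d → ℝ,
      Ψ ω₁ ω₂ = ft (fun t => (f t : ℂ)) ω₁ * (starRingEnd ℂ) (ft (fun t => (f t : ℂ)) ω₂) *
        ft (fun t => (p t : ℂ)) (ω₁ - ω₂))
    (hΨne : ∀ ω : Fin d → ℝ, Ψ ω ω ≠ 0) :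
    ∀ ω : Fin d → ℝ,
      ft (fun t => (f t : ℂ)) ω =
        Complex.exp (∫ α in (0:ℝ)..1,
          rcDot ω (fun j => grad (fun w => Ψ w (α • ω)) (α • ω) j / Ψ (α • ω) (α • ω))) := by
  intro ω
  -- integrability
  have hfInt : Integrable (fun t => (f t : ℂ)) :=
    (integrable_of_l2_support hfL2 hf_supp).ofReal
  have hpInt : Integrable (fun t => (p t : ℂ)) :=
    (integrable_of_l2_support hpL2 hp_supp).ofReal
  have hfInt' : Integrable (fun t : Fin d → ℝ => ‖t‖ * ‖(f t : ℂ)‖) := by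
    simpa using norm_smul_integrable_of_l2_support hfL2 hf_supp
  have hpInt' : Integrable (fun t : Fin d → ℝ => ‖t‖ * ‖(p t : ℂ)‖) := by
    simpa using norm_smul_integrable_of_l2_support hpL2 hp_supp
  set F : (Fin d → ℝ) → ℂ := ft (fun t => (f t : ℂ)) with hF_def
  set P : (Fin d → ℝ) → ℂ := ft (fun t => (p t : ℂ)) with hP_def
  have hF : ∀ w, HasFDerivAt F (kotD (fun t => (f t : ℂ)) w) w :=
    fun w => kot_hasFDerivAt hfInt hfInt' w
  have hP : ∀ w, HasFDerivAt P (kotD (fun t => (p t : ℂ)) w) w :=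
    fun w => kot_hasFDerivAt hpInt hpInt' w
  -- values at 0
  have hP0 : P 0 = 1 := by
    rw [hP_def, ft_ofReal_zero, hp_int, Complex.ofReal_one]
  have hDP0 : ∀ j, kotD (fun t => (p t : ℂ)) 0 (Pi.single j 1) = 0 := by
    intro j
    rw [kotD_zero_single hpInt hpInt' j, hp_centered j]
    simp
  -- nonvanishing
  have hFne : ∀ w, F w ≠ 0 := by
    intro w hw
    exact hΨne w (by rw [hΨ w w, hw, zero_mul, zero_mul])
  have hFconjne : ∀ w, (starRingEnd ℂ) (F w) ≠ 0 :=
    fun w => star_ne_zero.mpr (hFne w)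
  -- diagonal value of Ψ
  have hΨdiag : ∀ w, Ψ w w = F w * (starRingEnd ℂ) (F w) := by
    intro w
    rw [hΨ w w, sub_self, hP0, mul_one]
  -- derivative of w ↦ Ψ w β at β
  have hgrad : ∀ (β : Fin d → ℝ) (j : Fin d),
      grad (fun w => Ψ w β) β j =
        (starRingEnd ℂ) (F β) * kotD (fun t => (f t : ℂ)) β (Pi.single j 1) := by
    intro β j
    have hfun : (fun w => Ψ w β) =
        fun w => F w * (starRingEnd ℂ) (F β) * P (w - β) := funext fun w => hΨ w β
    have hshift : HasFDerivAt (fun w => P (w - β)) (kotD (fun t => (p t : ℂ)) 0) β := by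
      have h1 : HasFDerivAt (fun w : Fin d → ℝ => w - β)
          (ContinuousLinearMap.id ℝ (Fin d → ℝ)) β := (hasFDerivAt_id β).sub_const β
      have h0 : HasFDerivAt P (kotD (fun t => (p t : ℂ)) 0)
          ((fun w : Fin d → ℝ => w - β) β) := by simpa using hP 0
      exact HasFDerivAt.comp (g := P) (f := fun w : Fin d → ℝ => w - β) β h0 h1
    have hmulc : HasFDerivAt (fun w => F w * (starRingEnd ℂ) (F β))
        ((starRingEnd ℂ) (F β) • kotD (fun t => (f t : ℂ)) β) β :=
      (hF β).mul_const _
    have hprod : HasFDerivAt (fun w => F w * (starRingEnd ℂ) (F β) * P (w - β)) _ β := hmulc.mul hshift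
    rw [grad, hfun, hprod.fderiv]
    simp only [ContinuousLinearMap.add_apply, ContinuousLinearMap.smul_apply, hDP0 j,
      sub_self, hP0, smul_eq_mul, mul_zero, one_mul, zero_add]
  -- the integrand equals q
  set q : ℝ → ℂ := fun α => kotD (fun t => (f t : ℂ)) (α • ω) ω / F (α • ω) with hq_def
  have homega : ∀ (β : Fin d → ℝ),
      kotD (fun t => (f t : ℂ)) β ω =
        ∑ j, (ω j : ℂ) * kotD (fun t => (f t : ℂ)) β (Pi.single j 1) := by
    intro β
    have hω : ω = ∑ j, ω j • (Pi.single j 1 : Fin d → ℝ) := by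
      conv_lhs => rw [← Finset.univ_sum_single ω]
      refine Finset.sum_congr rfl fun j _ => ?_
      ext i
      simp [Pi.single_apply, mul_ite]
    conv_lhs => rw [hω]
    rw [map_sum]
    congr 1 with j
    rw [ContinuousLinearMap.map_smul]
    simp [Complex.real_smul]
  have hq_eq : ∀ α : ℝ,
      rcDot ω (fun j => grad (fun w => Ψ w (α • ω)) (α • ω) j / Ψ (α • ω) (α • ω)) = q α := by
    intro α
    set β := α • ω
    rw [rcDot, hq_def]
    have : ∀ j, grad (fun w => Ψ w β) β j / Ψ β β =
        kotD (fun t => (f t : ℂ)) β (Pi.single j 1) / F β := by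
      intro j
      rw [hgrad β j, hΨdiag β, mul_comm (F β), mul_div_mul_left _ _ (hFconjne β)]
    simp_rw [this]
    rw [homega β, Finset.sum_div]
    congr 1 with j
    rw [mul_div_assoc]
  -- continuity
  have hFcont : Continuous F := by
    have h : F = VectorFourier.fourierIntegral Real.fourierChar volume (kotL d).toLinearMap₁₂
        (fun t => (f t : ℂ)) := funext (ft_eq_fourierIntegral _)
    rw [h]
    exact VectorFourier.fourierIntegral_continuous Real.continuous_fourierChar
      (by apply (kotL d).continuous₂) hfInt
  have hsmul_cont : Continuous fun α : ℝ => α • ω := continuous_id.smul continuous_const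
  have hDcont : Continuous fun α : ℝ => kotD (fun t => (f t : ℂ)) (α • ω) ω := by
    have h1 := (kot_continuous_D hfInt hfInt').comp hsmul_cont
    exact (ContinuousLinearMap.apply ℝ ℂ ω).continuous.comp h1
  have hq_cont : Continuous q := hDcont.div (hFcont.comp hsmul_cont) (fun α => hFne _)
  -- derivative of the path
  have hG : ∀ α : ℝ, HasDerivAt (fun s : ℝ => F (s • ω))
      (kotD (fun t => (f t : ℂ)) (α • ω) ω) α := by
    intro α
    have hsm : HasDerivAt (fun s : ℝ => s • ω) ω α := by
      simpa using (hasDerivAt_id α).smul_const ω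
    exact (hF (α • ω)).comp_hasDerivAt α hsm
  set Iq : ℝ → ℂ := fun a => ∫ s in (0:ℝ)..a, q s with hI_def
  have hI : ∀ a : ℝ, HasDerivAt Iq (q a) a := by
    intro a
    exact intervalIntegral.integral_hasDerivAt_right (hq_cont.intervalIntegrable _ _)
      hq_cont.stronglyMeasurable.stronglyMeasurableAtFilter hq_cont.continuousAt
  have hK : ∀ a : ℝ, HasDerivAt (fun s : ℝ => F (s • ω) * Complex.exp (-Iq s)) 0 a := by
    intro a
    have h2 : HasDerivAt (fun s : ℝ => Complex.exp (-Iq s))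
        (Complex.exp (-Iq a) * -q a) a := ((hI a).neg).cexp
    have h3 : HasDerivAt (fun s : ℝ => F (s • ω) * Complex.exp (-Iq s)) _ a := (hG a).mul h2
    convert h3 using 1
    have hne := hFne (a • ω)
    rw [hq_def]
    field_simp
    ring
  have hconst := is_const_of_deriv_eq_zero
    (f := fun s : ℝ => F (s • ω) * Complex.exp (-Iq s))
    (fun a => (hK a).differentiableAt) (fun a => (hK a).deriv) 1 0
  have h0 : F ((0:ℝ) • ω) * Complex.exp (-Iq 0) = 1 := by
    rw [zero_smul, hI_def]
    simp only [intervalIntegral.integral_same, neg_zero, Complex.exp_zero, mul_one]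
    exact hf0
  rw [h0, one_smul] at hconst
  have hint_eq : (∫ α in (0:ℝ)..1,
      rcDot ω (fun j => grad (fun w => Ψ w (α • ω)) (α • ω) j / Ψ (α • ω) (α • ω))) = Iq 1 :=
    intervalIntegral.integral_congr (fun α _ => hq_eq α)
  rw [hint_eq]
  rw [Complex.exp_neg] at hconst
  exact (mul_inv_eq_one₀ (Complex.exp_ne_zero _)).mp hconst
end
end

section
/- Let X₀, X₁, X₂ be independent integrable random vectors in ℝ^d on a probability space, and set Z₁ := X₀ + X₁, Z₂ := X₀ + X₂. Let φ_k(ω) := E[e^{i ω·X_k}] for k = 0,1,2 and ψ(ω₁, ω₂) := E[e^{i ω₁·Z₁ + i ω₂·Z₂}]. Then (a) ψ(ω₁, ω₂) = φ₀(ω₁ + ω₂) φ₁(ω₁) φ₂(ω₂) for all ω₁, ω₂ ∈ ℝ^d, and (b) if ψ is nowhere vanishing, then for every ω ∈ ℝ^d: φ₀(ω) = exp( −i ω·E[X₁] + ∫₀¹ (∇₁ψ(0, αω) / ψ(0, αω)) · ω dα ), where ∇₁ denotes the gradient with respect to the first argument. -/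
open MeasureTheory Complex ProbabilityTheory

noncomputable section

namespace KotAux

variable {Ω : Type*} [MeasurableSpace Ω] {μ : Measure Ω}

lemma norm_exp_I_mul (r : ℝ) : ‖Complex.exp (Complex.I * r)‖ = 1 := by
  simp [Complex.norm_exp, Complex.mul_re]

lemma norm_exp_I_mul_add (r s : ℝ) :
    ‖Complex.exp (Complex.I * r + Complex.I * s)‖ = 1 := by
  simp [Complex.norm_exp, Complex.add_re, Complex.mul_re]

lemma norm_I_mul_ofReal (r : ℝ) : ‖Complex.I * (r : ℂ)‖ = |r| := by
  simp [map_mul]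

lemma int_of_bdd [IsProbabilityMeasure μ] {f : Ω → ℂ} (hm : AEStronglyMeasurable f μ)
    (hb : ∀ a, ‖f a‖ ≤ 1) : Integrable f μ :=
  (integrable_const (1:ℝ)).mono' hm (Filter.Eventually.of_forall hb)

lemma integrable_coord {d : ℕ} {X : Ω → Fin d → ℝ} (hm : Measurable X)
    (hi : Integrable X μ) (j : Fin d) : Integrable (fun a => X a j) μ :=
  hi.norm.mono' ((measurable_pi_apply j).comp hm).aestronglyMeasurable
    (Filter.Eventually.of_forall fun a => norm_le_pi_norm (X a) j)

lemma indep_integral_mul {f g : Ω → ℂ} (h : IndepFun f g μ)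
    (hf : Integrable f μ) (hg : Integrable g μ) :
    ∫ a, f a * g a ∂μ = (∫ a, f a ∂μ) * ∫ a, g a ∂μ := by
  have hre : ∀ {u : Ω → ℂ}, Integrable u μ → ∫ a, (u a).re ∂μ = (∫ a, u a ∂μ).re :=
    fun hu => Complex.reCLM.integral_comp_comm hu
  have him : ∀ {u : Ω → ℂ}, Integrable u μ → ∫ a, (u a).im ∂μ = (∫ a, u a ∂μ).im :=
    fun hu => Complex.imCLM.integral_comp_comm hu
  have hfg : Integrable (fun a => f a * g a) μ := h.integrable_mul hf hg
  have hfr : Integrable (fun a => (f a).re) μ := by simpa using hf.re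
  have hfi : Integrable (fun a => (f a).im) μ := by simpa using hf.im
  have hgr : Integrable (fun a => (g a).re) μ := by simpa using hg.re
  have hgi : Integrable (fun a => (g a).im) μ := by simpa using hg.im
  have irr : IndepFun (fun a => (f a).re) (fun a => (g a).re) μ :=
    h.comp Complex.measurable_re Complex.measurable_re
  have iri : IndepFun (fun a => (f a).re) (fun a => (g a).im) μ :=
    h.comp Complex.measurable_re Complex.measurable_im
  have iir : IndepFun (fun a => (f a).im) (fun a => (g a).re) μ :=
    h.comp Complex.measurable_im Complex.measurable_re
  have iii : IndepFun (fun a => (f a).im) (fun a => (g a).im) μ :=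
    h.comp Complex.measurable_im Complex.measurable_im
  have prr : Integrable (fun a => (f a).re * (g a).re) μ := irr.integrable_mul hfr hgr
  have pri : Integrable (fun a => (f a).re * (g a).im) μ := iri.integrable_mul hfr hgi
  have pir : Integrable (fun a => (f a).im * (g a).re) μ := iir.integrable_mul hfi hgr
  have pii : Integrable (fun a => (f a).im * (g a).im) μ := iii.integrable_mul hfi hgi
  have err : ∫ a, (f a).re * (g a).re ∂μ = (∫ a, (f a).re ∂μ) * ∫ a, (g a).re ∂μ :=
    irr.integral_fun_mul_eq_mul_integral hfr.aestronglyMeasurable hgr.aestronglyMeasurable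
  have eri : ∫ a, (f a).re * (g a).im ∂μ = (∫ a, (f a).re ∂μ) * ∫ a, (g a).im ∂μ :=
    iri.integral_fun_mul_eq_mul_integral hfr.aestronglyMeasurable hgi.aestronglyMeasurable
  have eir : ∫ a, (f a).im * (g a).re ∂μ = (∫ a, (f a).im ∂μ) * ∫ a, (g a).re ∂μ :=
    iir.integral_fun_mul_eq_mul_integral hfi.aestronglyMeasurable hgr.aestronglyMeasurable
  have eii : ∫ a, (f a).im * (g a).im ∂μ = (∫ a, (f a).im ∂μ) * ∫ a, (g a).im ∂μ :=
    iii.integral_fun_mul_eq_mul_integral hfi.aestronglyMeasurable hgi.aestronglyMeasurable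
  apply Complex.ext
  · rw [← hre hfg, Complex.mul_re, ← hre hf, ← hre hg, ← him hf, ← him hg]
    calc ∫ a, (f a * g a).re ∂μ
        = ∫ a, ((f a).re * (g a).re - (f a).im * (g a).im) ∂μ := by
          simp_rw [Complex.mul_re]
      _ = _ := by rw [integral_sub prr pii, err, eii]
  · rw [← him hfg, Complex.mul_im, ← hre hf, ← hre hg, ← him hf, ← him hg]
    calc ∫ a, (f a * g a).im ∂μ
        = ∫ a, ((f a).re * (g a).im + (f a).im * (g a).re) ∂μ := by
          simp_rw [Complex.mul_im]
      _ = _ := by rw [integral_add pri pir, eri, eir]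

lemma triple_mul [IsProbabilityMeasure μ] {β : Type*} [MeasurableSpace β]
    {X₀ X₁ X₂ : Ω → β} (hX₀ : Measurable X₀) (hX₁ : Measurable X₁) (hX₂ : Measurable X₂)
    (hind012 : IndepFun (fun a => (X₀ a, X₁ a)) X₂ μ) (hind01 : IndepFun X₀ X₁ μ)
    (g₀ g₁ g₂ : β → ℂ) (hm₀ : Measurable g₀) (hm₁ : Measurable g₁) (hm₂ : Measurable g₂)
    (hb₀ : ∀ x, ‖g₀ x‖ ≤ 1) (hb₁ : ∀ x, ‖g₁ x‖ ≤ 1) (hb₂ : ∀ x, ‖g₂ x‖ ≤ 1) :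
    ∫ a, g₀ (X₀ a) * g₁ (X₁ a) * g₂ (X₂ a) ∂μ
      = (∫ a, g₀ (X₀ a) ∂μ) * (∫ a, g₁ (X₁ a) ∂μ) * ∫ a, g₂ (X₂ a) ∂μ := by
  have i₀ : Integrable (fun a => g₀ (X₀ a)) μ :=
    int_of_bdd ((hm₀.comp hX₀).aestronglyMeasurable) fun a => hb₀ _
  have i₁ : Integrable (fun a => g₁ (X₁ a)) μ :=
    int_of_bdd ((hm₁.comp hX₁).aestronglyMeasurable) fun a => hb₁ _
  have i₂ : Integrable (fun a => g₂ (X₂ a)) μ :=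
    int_of_bdd ((hm₂.comp hX₂).aestronglyMeasurable) fun a => hb₂ _
  have i01 : Integrable (fun a => g₀ (X₀ a) * g₁ (X₁ a)) μ := by
    refine int_of_bdd (((hm₀.comp hX₀).mul (hm₁.comp hX₁)).aestronglyMeasurable) fun a => ?_
    rw [norm_mul]
    exact mul_le_one₀ (hb₀ _) (norm_nonneg _) (hb₁ _)
  have step1 : ∫ a, (g₀ (X₀ a) * g₁ (X₁ a)) * g₂ (X₂ a) ∂μ
      = (∫ a, g₀ (X₀ a) * g₁ (X₁ a) ∂μ) * ∫ a, g₂ (X₂ a) ∂μ :=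
    indep_integral_mul
      (hind012.comp ((hm₀.comp measurable_fst).mul (hm₁.comp measurable_snd)) hm₂) i01 i₂
  have step2 : ∫ a, g₀ (X₀ a) * g₁ (X₁ a) ∂μ = (∫ a, g₀ (X₀ a) ∂μ) * ∫ a, g₁ (X₁ a) ∂μ :=
    indep_integral_mul (hind01.comp hm₀ hm₁) i₀ i₁
  rw [step1, step2]

lemma charDeriv [IsProbabilityMeasure μ] {Y : Ω → ℝ} (hm : Measurable Y)
    (hi : Integrable Y μ) (α : ℝ) :
    Integrable (fun a => Complex.I * (Y a : ℂ) *
        Complex.exp (Complex.I * ((α * Y a : ℝ) : ℂ))) μ ∧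
    HasDerivAt (fun t : ℝ => ∫ a, Complex.exp (Complex.I * ((t * Y a : ℝ) : ℂ)) ∂μ)
      (∫ a, Complex.I * (Y a : ℂ) * Complex.exp (Complex.I * ((α * Y a : ℝ) : ℂ)) ∂μ) α := by
  have hFm : ∀ t : ℝ,
      AEStronglyMeasurable (fun a => Complex.exp (Complex.I * ((t * Y a : ℝ) : ℂ))) μ :=
    fun t => ((measurable_const.mul
      (Complex.measurable_ofReal.comp (measurable_const.mul hm))).cexp).aestronglyMeasurable
  have h := hasDerivAt_integral_of_dominated_loc_of_deriv_le (μ := μ) (x₀ := α)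
      (F := fun t a => Complex.exp (Complex.I * ((t * Y a : ℝ) : ℂ)))
      (F' := fun t a => Complex.I * (Y a : ℂ) * Complex.exp (Complex.I * ((t * Y a : ℝ) : ℂ)))
      (bound := fun a => |Y a|) (Metric.ball_mem_nhds α one_pos)
      (Filter.Eventually.of_forall hFm)
      (int_of_bdd (hFm α) (fun a => le_of_eq (norm_exp_I_mul _)))
      (((measurable_const.mul (Complex.measurable_ofReal.comp hm)).mul
        ((measurable_const.mul
          (Complex.measurable_ofReal.comp (measurable_const.mul hm))).cexp)).aestronglyMeasurable)
      ?_ hi.abs ?_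
  · exact ⟨h.1, h.2⟩
  · refine Filter.Eventually.of_forall fun a => fun x _ => ?_
    rw [norm_mul, norm_exp_I_mul, norm_mul, mul_one]
    simp [Real.norm_eq_abs]
  · refine Filter.Eventually.of_forall fun a => fun x _ => ?_
    have base : HasDerivAt (fun t : ℝ => t * Y a) (Y a) x := hasDerivAt_mul_const _
    have base2 : HasDerivAt (fun t : ℝ => ((t * Y a : ℝ) : ℂ)) ((Y a : ℝ) : ℂ) x :=
      base.ofReal_comp
    have base3 : HasDerivAt (fun t : ℝ => Complex.I * ((t * Y a : ℝ) : ℂ))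
        (Complex.I * (Y a : ℂ)) x := base2.const_mul _
    have h4 := base3.cexp
    exact h4.congr_deriv (by ring)

/-- the continuous linear map `v ↦ ↑(∑ k, v k * z k) : ℂ` -/
def Lmap {d : ℕ} (z : Fin d → ℝ) : (Fin d → ℝ) →L[ℝ] ℂ :=
  ∑ k, z k • ((Complex.ofRealCLM).comp (ContinuousLinearMap.proj k))

lemma Lmap_apply {d : ℕ} (z v : Fin d → ℝ) :
    Lmap z v = ((∑ k, v k * z k : ℝ) : ℂ) := by
  simp only [Lmap, ContinuousLinearMap.sum_apply, ContinuousLinearMap.smul_apply,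
    ContinuousLinearMap.comp_apply, ContinuousLinearMap.proj_apply,
    Complex.ofRealCLM_apply, Complex.real_smul]
  push_cast
  exact Finset.sum_congr rfl fun k _ => (mul_comm _ _)

lemma Lmap_norm_le {d : ℕ} (z : Fin d → ℝ) : ‖Lmap z‖ ≤ ∑ k, |z k| := by
  refine ContinuousLinearMap.opNorm_le_bound _
    (Finset.sum_nonneg fun k _ => abs_nonneg _) fun v => ?_
  rw [Lmap_apply]
  calc ‖((∑ k, v k * z k : ℝ) : ℂ)‖ = |∑ k, v k * z k| := by
        rw [Complex.norm_real, Real.norm_eq_abs]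
    _ ≤ ∑ k, |v k * z k| := Finset.abs_sum_le_sum_abs _ _
    _ ≤ ∑ k, |z k| * ‖v‖ := by
        refine Finset.sum_le_sum fun k _ => ?_
        rw [abs_mul, mul_comm]
        exact mul_le_mul_of_nonneg_left (norm_le_pi_norm v k) (abs_nonneg _)
    _ = (∑ k, |z k|) * ‖v‖ := by rw [Finset.sum_mul]

lemma Lmap_continuous {d : ℕ} : Continuous (fun z : Fin d → ℝ => Lmap z) := by
  unfold Lmap
  exact continuous_finset_sum _ fun k _ => (continuous_apply k).smul continuous_const

lemma grad_integral_exp [IsProbabilityMeasure μ] {d : ℕ} {T : Ω → Fin d → ℝ}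
    (hTm : Measurable T) (hTi : Integrable T μ) {c : Ω → ℝ} (hcm : Measurable c) (j : Fin d) :
    grad (fun w => ∫ a, Complex.exp (Complex.I * ((∑ k, w k * T a k : ℝ) : ℂ)
        + Complex.I * ((c a : ℝ) : ℂ)) ∂μ) 0 j
      = ∫ a, Complex.I * (T a j : ℂ) * Complex.exp (Complex.I * ((c a : ℝ) : ℂ)) ∂μ := by
  classical
  set F : (Fin d → ℝ) → Ω → ℂ := fun w a =>
    Complex.exp (Complex.I * ((∑ k, w k * T a k : ℝ) : ℂ) + Complex.I * ((c a : ℝ) : ℂ)) with hF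
  set F' : (Fin d → ℝ) → Ω → (Fin d → ℝ) →L[ℝ] ℂ := fun w a =>
    (Complex.exp (Complex.I * ((∑ k, w k * T a k : ℝ) : ℂ) + Complex.I * ((c a : ℝ) : ℂ))
      * Complex.I) • Lmap (T a) with hF'
  have hSm : ∀ w : Fin d → ℝ, Measurable (fun a => (∑ k, w k * T a k : ℝ)) := fun w =>
    Finset.measurable_sum _ fun k _ => measurable_const.mul ((measurable_pi_apply k).comp hTm)
  have hFm : ∀ w, AEStronglyMeasurable (F w) μ := fun w =>
    (((measurable_const.mul (Complex.measurable_ofReal.comp (hSm w))).add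
      (measurable_const.mul (Complex.measurable_ofReal.comp hcm))).cexp).aestronglyMeasurable
  have hF'm : ∀ w, AEStronglyMeasurable (F' w) μ := fun w => by
    refine AEStronglyMeasurable.fun_smul ?_ ?_
    · exact ((((measurable_const.mul (Complex.measurable_ofReal.comp (hSm w))).add
        (measurable_const.mul (Complex.measurable_ofReal.comp hcm))).cexp).mul
        measurable_const).aestronglyMeasurable
    · exact (Lmap_continuous.measurable.comp hTm).aestronglyMeasurable
  have hnorm : ∀ w a, ‖F' w a‖ ≤ ∑ k, |T a k| := by
    intro w a
    rw [hF']
    refine ContinuousLinearMap.opNorm_le_bound _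
      (Finset.sum_nonneg fun k _ => abs_nonneg _) fun v => ?_
    rw [ContinuousLinearMap.smul_apply, norm_smul, norm_mul, norm_exp_I_mul_add]
    have : ‖Complex.I‖ = 1 := by simp
    rw [this, one_mul, one_mul]
    exact ((Lmap (T a)).le_opNorm v).trans
      (mul_le_mul_of_nonneg_right (Lmap_norm_le (T a)) (norm_nonneg v))
  have hdiff : ∀ a, ∀ w : Fin d → ℝ, HasFDerivAt (fun x => F x a) (F' w a) w := by
    intro a w
    have hinner : HasFDerivAt (fun x : Fin d → ℝ => ((∑ k, x k * T a k : ℝ) : ℂ))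
        (Lmap (T a)) w := by
      have h2 : (fun x : Fin d → ℝ => ((∑ k, x k * T a k : ℝ) : ℂ)) = ⇑(Lmap (T a)) :=
        funext fun v => (Lmap_apply _ v).symm
      rw [h2]
      exact (Lmap (T a)).hasFDerivAt
    have houter : HasDerivAt
        (fun t : ℂ => Complex.exp (Complex.I * t + Complex.I * ((c a : ℝ) : ℂ)))
        (Complex.exp (Complex.I * ((∑ k, w k * T a k : ℝ) : ℂ)
          + Complex.I * ((c a : ℝ) : ℂ)) * Complex.I)
        (((∑ k, w k * T a k : ℝ) : ℂ)) := by
      have h3 : HasDerivAt (fun t : ℂ => Complex.I * t + Complex.I * ((c a : ℝ) : ℂ))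
          Complex.I (((∑ k, w k * T a k : ℝ) : ℂ)) := by
        simpa using ((hasDerivAt_id (((∑ k, w k * T a k : ℝ) : ℂ))).const_mul
          Complex.I).add_const (Complex.I * ((c a : ℝ) : ℂ))
      simpa using h3.cexp
    have := houter.comp_hasFDerivAt w hinner; exact this
  have boundint : Integrable (fun a => ∑ k, |T a k|) μ :=
    integrable_finset_sum _ fun k _ => (integrable_coord hTm hTi k).abs
  have key : HasFDerivAt (fun w => ∫ a, F w a ∂μ) (∫ a, F' 0 a ∂μ) 0 := by
    refine hasFDerivAt_integral_of_dominated_of_fderiv_le (Metric.ball_mem_nhds 0 one_pos)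
      (Filter.Eventually.of_forall hFm)
      (int_of_bdd (hFm 0) (fun a => le_of_eq (norm_exp_I_mul_add _ _)))
      (hF'm 0)
      (Filter.Eventually.of_forall fun a => fun x _ => hnorm x a)
      boundint
      (Filter.Eventually.of_forall fun a => fun x _ => hdiff a x)
  have hintF' : Integrable (F' 0) μ :=
    boundint.mono' (hF'm 0) (Filter.Eventually.of_forall fun a => hnorm 0 a)
  have h5 : grad (fun w => ∫ a, F w a ∂μ) 0 j = (∫ a, F' 0 a ∂μ) (Pi.single j 1) := by
    show fderiv ℝ (fun w => ∫ a, F w a ∂μ) 0 (Pi.single j 1) = _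
    rw [key.fderiv]
  rw [show (fun w => ∫ a, Complex.exp (Complex.I * ((∑ k, w k * T a k : ℝ) : ℂ)
        + Complex.I * ((c a : ℝ) : ℂ)) ∂μ) = fun w => ∫ a, F w a ∂μ from rfl]
  rw [h5, ContinuousLinearMap.integral_apply hintF']
  refine integral_congr_ae (Filter.Eventually.of_forall fun a => ?_)
  rw [hF']
  simp only [ContinuousLinearMap.smul_apply, Lmap_apply]
  have h6 : (∑ k, (Pi.single j 1 : Fin d → ℝ) k * T a k) = T a j := by
    rw [Finset.sum_eq_single j]
    · simp
    · intro k _ hk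
      simp [Pi.single_apply, hk]
    · simp
  have h7 : (∑ k, (0 : Fin d → ℝ) k * T a k : ℝ) = 0 := by simp
  rw [h6, h7]
  simp [smul_eq_mul]
  ring

end KotAux

/-- **Multivariate Kotlarski.**
Let `X₀, X₁, X₂` be independent integrable random vectors in `ℝ^d`, `Z₁ = X₀ + X₁`,
`Z₂ = X₀ + X₂`, `φ_k(ω) = E[e^{iω·X_k}]`, `ψ(ω₁,ω₂) = E[e^{iω₁·Z₁ + iω₂·Z₂}]`. Then
(a) `ψ(ω₁,ω₂) = φ₀(ω₁+ω₂) φ₁(ω₁) φ₂(ω₂)`, and (b) if `ψ` is nowhere vanishing then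
`φ₀(ω) = exp (-i ω·E[X₁] + ∫₀¹ (∇₁ψ(0,αω)/ψ(0,αω)) · ω dα)`. -/
theorem multivariate_kotlarski
    (d : ℕ)
    (Ω : Type*) [MeasurableSpace Ω] (μ : Measure Ω) [IsProbabilityMeasure μ]
    (X₀ X₁ X₂ : Ω → Fin d → ℝ)
    (hX₀ : Measurable X₀) (hX₁ : Measurable X₁) (hX₂ : Measurable X₂)
    (hindep : iIndepFun ![X₀, X₁, X₂] μ)
    (hint₀ : Integrable X₀ μ) (hint₁ : Integrable X₁ μ) (hint₂ : Integrable X₂ μ)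
    (φ₀ φ₁ φ₂ : (Fin d → ℝ) → ℂ)
    (hφ₀ : ∀ ω : Fin d → ℝ,
      φ₀ ω = ∫ a, Complex.exp (Complex.I * ((∑ j, ω j * X₀ a j : ℝ) : ℂ)) ∂μ)
    (hφ₁ : ∀ ω : Fin d → ℝ,
      φ₁ ω = ∫ a, Complex.exp (Complex.I * ((∑ j, ω j * X₁ a j : ℝ) : ℂ)) ∂μ)
    (hφ₂ : ∀ ω : Fin d → ℝ,
      φ₂ ω = ∫ a, Complex.exp (Complex.I * ((∑ j, ω j * X₂ a j : ℝ) : ℂ)) ∂μ)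
    (ψ : (Fin d → ℝ) → (Fin d → ℝ) → ℂ)
    (hψ : ∀ ω₁ ω₂ : Fin d → ℝ,
      ψ ω₁ ω₂ = ∫ a, Complex.exp
        (Complex.I * ((∑ j, ω₁ j * (X₀ a j + X₁ a j) : ℝ) : ℂ) +
         Complex.I * ((∑ j, ω₂ j * (X₀ a j + X₂ a j) : ℝ) : ℂ)) ∂μ) :
    (∀ ω₁ ω₂ : Fin d → ℝ, ψ ω₁ ω₂ = φ₀ (ω₁ + ω₂) * φ₁ ω₁ * φ₂ ω₂) ∧
    ((∀ ω₁ ω₂ : Fin d → ℝ, ψ ω₁ ω₂ ≠ 0) →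
      ∀ ω : Fin d → ℝ,
        φ₀ ω = Complex.exp
          (-Complex.I * ((∑ j, ω j * (∫ a, X₁ a j ∂μ) : ℝ) : ℂ) +
            ∫ α in (0:ℝ)..1,
              rcDot ω (fun j => grad (fun w => ψ w (α • ω)) 0 j / ψ 0 (α • ω)))) := by
    classical
  have hmeas3 : ∀ i, Measurable (![X₀, X₁, X₂] i) := by
    intro i
    fin_cases i
    · exact hX₀
    · exact hX₁
    · exact hX₂
  have hind01_2 : IndepFun (fun a => (X₀ a, X₁ a)) X₂ μ :=
    hindep.indepFun_prodMk hmeas3 0 1 2 (by decide) (by decide)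
  have hind02_1 : IndepFun (fun a => (X₀ a, X₂ a)) X₁ μ :=
    hindep.indepFun_prodMk hmeas3 0 2 1 (by decide) (by decide)
  have hind01 : IndepFun X₀ X₁ μ := hindep.indepFun (show (0:Fin 3) ≠ 1 by decide)
  have hind02 : IndepFun X₀ X₂ μ := hindep.indepFun (show (0:Fin 3) ≠ 2 by decide)
  have gm : ∀ v : Fin d → ℝ, Measurable (fun x : Fin d → ℝ =>
      Complex.exp (Complex.I * ((∑ k, v k * x k : ℝ) : ℂ))) := fun v =>
    (measurable_const.mul (Complex.measurable_ofReal.comp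
      (Finset.measurable_sum _ fun k _ => measurable_const.mul (measurable_pi_apply k)))).cexp
  have gb : ∀ (v x : Fin d → ℝ),
      ‖Complex.exp (Complex.I * ((∑ k, v k * x k : ℝ) : ℂ))‖ ≤ 1 :=
    fun v x => le_of_eq (KotAux.norm_exp_I_mul _)
  have parta : ∀ ω₁ ω₂ : Fin d → ℝ, ψ ω₁ ω₂ = φ₀ (ω₁ + ω₂) * φ₁ ω₁ * φ₂ ω₂ := by
    intro ω₁ ω₂
    rw [hψ ω₁ ω₂, hφ₀ (ω₁ + ω₂), hφ₁ ω₁, hφ₂ ω₂]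
    have hpt : ∀ a, Complex.exp
        (Complex.I * ((∑ j, ω₁ j * (X₀ a j + X₁ a j) : ℝ) : ℂ) +
         Complex.I * ((∑ j, ω₂ j * (X₀ a j + X₂ a j) : ℝ) : ℂ))
        = Complex.exp (Complex.I * ((∑ k, (ω₁ + ω₂) k * X₀ a k : ℝ) : ℂ))
          * Complex.exp (Complex.I * ((∑ k, ω₁ k * X₁ a k : ℝ) : ℂ))
          * Complex.exp (Complex.I * ((∑ k, ω₂ k * X₂ a k : ℝ) : ℂ)) := by
      intro a
      rw [← Complex.exp_add, ← Complex.exp_add]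
      congr 1
      have hsum : (∑ j, ω₁ j * (X₀ a j + X₁ a j)) + (∑ j, ω₂ j * (X₀ a j + X₂ a j))
          = (∑ k, (ω₁ + ω₂) k * X₀ a k) + ((∑ k, ω₁ k * X₁ a k) + (∑ k, ω₂ k * X₂ a k)) := by
        simp only [Pi.add_apply, mul_add, add_mul, Finset.sum_add_distrib]
        ring
      have h2 : ((∑ j, ω₁ j * (X₀ a j + X₁ a j) : ℝ) : ℂ)
            + ((∑ j, ω₂ j * (X₀ a j + X₂ a j) : ℝ) : ℂ)
          = ((∑ k, (ω₁ + ω₂) k * X₀ a k : ℝ) : ℂ)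
            + (((∑ k, ω₁ k * X₁ a k : ℝ) : ℂ) + ((∑ k, ω₂ k * X₂ a k : ℝ) : ℂ)) := by
        rw [← Complex.ofReal_add, ← Complex.ofReal_add, ← Complex.ofReal_add, hsum]
      linear_combination Complex.I * h2
    calc ∫ a, Complex.exp
          (Complex.I * ((∑ j, ω₁ j * (X₀ a j + X₁ a j) : ℝ) : ℂ) +
           Complex.I * ((∑ j, ω₂ j * (X₀ a j + X₂ a j) : ℝ) : ℂ)) ∂μ
        = ∫ a, Complex.exp (Complex.I * ((∑ k, (ω₁ + ω₂) k * X₀ a k : ℝ) : ℂ))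
            * Complex.exp (Complex.I * ((∑ k, ω₁ k * X₁ a k : ℝ) : ℂ))
            * Complex.exp (Complex.I * ((∑ k, ω₂ k * X₂ a k : ℝ) : ℂ)) ∂μ :=
          integral_congr_ae (Filter.Eventually.of_forall hpt)
      _ = (∫ a, Complex.exp (Complex.I * ((∑ j, (ω₁ + ω₂) j * X₀ a j : ℝ) : ℂ)) ∂μ)
            * (∫ a, Complex.exp (Complex.I * ((∑ j, ω₁ j * X₁ a j : ℝ) : ℂ)) ∂μ)
            * ∫ a, Complex.exp (Complex.I * ((∑ j, ω₂ j * X₂ a j : ℝ) : ℂ)) ∂μ :=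
          KotAux.triple_mul hX₀ hX₁ hX₂ hind01_2 hind01
            (fun x => Complex.exp (Complex.I * ((∑ k, (ω₁ + ω₂) k * x k : ℝ) : ℂ)))
            (fun x => Complex.exp (Complex.I * ((∑ k, ω₁ k * x k : ℝ) : ℂ)))
            (fun x => Complex.exp (Complex.I * ((∑ k, ω₂ k * x k : ℝ) : ℂ)))
            (gm _) (gm _) (gm _) (gb _) (gb _) (gb _)
  refine ⟨parta, ?_⟩
  intro hne ω
  have hX₀c : ∀ j, Integrable (fun a => X₀ a j) μ := KotAux.integrable_coord hX₀ hint₀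
  have hX₁c : ∀ j, Integrable (fun a => X₁ a j) μ := KotAux.integrable_coord hX₁ hint₁
  have hX₂c : ∀ j, Integrable (fun a => X₂ a j) μ := KotAux.integrable_coord hX₂ hint₂
  have hS₀m : Measurable (fun a => (∑ k, ω k * X₀ a k : ℝ)) :=
    Finset.measurable_sum _ fun k _ => measurable_const.mul ((measurable_pi_apply k).comp hX₀)
  have hS₁m : Measurable (fun a => (∑ k, ω k * X₁ a k : ℝ)) :=
    Finset.measurable_sum _ fun k _ => measurable_const.mul ((measurable_pi_apply k).comp hX₁)
  have hS₂m : Measurable (fun a => (∑ k, ω k * X₂ a k : ℝ)) :=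
    Finset.measurable_sum _ fun k _ => measurable_const.mul ((measurable_pi_apply k).comp hX₂)
  have hS₀i : Integrable (fun a => (∑ k, ω k * X₀ a k : ℝ)) μ :=
    integrable_finset_sum _ fun k _ => (hX₀c k).const_mul _
  have hS₁i : Integrable (fun a => (∑ k, ω k * X₁ a k : ℝ)) μ :=
    integrable_finset_sum _ fun k _ => (hX₁c k).const_mul _
  set s : ℝ := ∑ j, ω j * ∫ a, X₁ a j ∂μ with hs
  set F : ℝ → ℂ := fun t =>
    ∫ a, Complex.exp (Complex.I * ((t * ∑ k, ω k * X₀ a k : ℝ) : ℂ)) ∂μ with hFdef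
  set F' : ℝ → ℂ := fun t =>
    ∫ a, Complex.I * ((∑ k, ω k * X₀ a k : ℝ) : ℂ)
      * Complex.exp (Complex.I * ((t * ∑ k, ω k * X₀ a k : ℝ) : ℂ)) ∂μ with hF'def
  set P₂ : ℝ → ℂ := fun t =>
    ∫ a, Complex.exp (Complex.I * ((t * ∑ k, ω k * X₂ a k : ℝ) : ℂ)) ∂μ with hP₂def
  have hFd : ∀ t, HasDerivAt F (F' t) t := fun t => (KotAux.charDeriv hS₀m hS₀i t).2
  have hF'int : ∀ t, Integrable (fun a => Complex.I * ((∑ k, ω k * X₀ a k : ℝ) : ℂ)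
      * Complex.exp (Complex.I * ((t * ∑ k, ω k * X₀ a k : ℝ) : ℂ))) μ :=
    fun t => (KotAux.charDeriv hS₀m hS₀i t).1
  have hsmul₀ : ∀ (t : ℝ) (x : Fin d → ℝ), (∑ k, (t • ω) k * x k) = t * ∑ k, ω k * x k := by
    intro t x
    rw [Finset.mul_sum]
    exact Finset.sum_congr rfl fun k _ => by simp [mul_assoc]
  have hφ₀t : ∀ t : ℝ, φ₀ (t • ω) = F t := by
    intro t
    rw [hφ₀ (t • ω)]
    exact integral_congr_ae (Filter.Eventually.of_forall fun a => by simp only [hsmul₀ t])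
  have hφ₂t : ∀ t : ℝ, φ₂ (t • ω) = P₂ t := by
    intro t
    rw [hφ₂ (t • ω)]
    exact integral_congr_ae (Filter.Eventually.of_forall fun a => by simp only [hsmul₀ t])
  have hφ₁0 : φ₁ 0 = 1 := by
    rw [hφ₁ 0]
    simp
  have hψ0 : ∀ t : ℝ, ψ 0 (t • ω) = F t * P₂ t := by
    intro t
    rw [parta 0 (t • ω), zero_add, hφ₁0, hφ₀t t, hφ₂t t]
    ring
  have hFne : ∀ t : ℝ, F t ≠ 0 := by
    intro t
    have h := hne 0 (t • ω)
    rw [hψ0 t] at h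
    exact (mul_ne_zero_iff.mp h).1
  have hP₂ne : ∀ t : ℝ, P₂ t ≠ 0 := by
    intro t
    have h := hne 0 (t • ω)
    rw [hψ0 t] at h
    exact (mul_ne_zero_iff.mp h).2
  have hZ₁m : Measurable (fun a => fun k => X₀ a k + X₁ a k) :=
    measurable_pi_lambda _ fun k =>
      ((measurable_pi_apply k).comp hX₀).add ((measurable_pi_apply k).comp hX₁)
  have hZ₁i : Integrable (fun a => fun k => X₀ a k + X₁ a k) μ := hint₀.add hint₁
  have hgrad : ∀ (α : ℝ) (j : Fin d), grad (fun w => ψ w (α • ω)) 0 j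
      = ∫ a, Complex.I * ((X₀ a j + X₁ a j : ℝ) : ℂ)
          * Complex.exp (Complex.I * ((∑ k, (α • ω) k * (X₀ a k + X₂ a k) : ℝ) : ℂ)) ∂μ := by
    intro α j
    have hcm : Measurable (fun a => (∑ k, (α • ω) k * (X₀ a k + X₂ a k) : ℝ)) :=
      Finset.measurable_sum _ fun k _ => measurable_const.mul
        (((measurable_pi_apply k).comp hX₀).add ((measurable_pi_apply k).comp hX₂))
    rw [show (fun w => ψ w (α • ω)) = (fun w => ∫ a, Complex.exp
        (Complex.I * ((∑ k, w k * (X₀ a k + X₁ a k) : ℝ) : ℂ)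
          + Complex.I * ((∑ k, (α • ω) k * (X₀ a k + X₂ a k) : ℝ) : ℂ)) ∂μ)
      from funext fun w => hψ w (α • ω)]
    exact KotAux.grad_integral_exp hZ₁m hZ₁i hcm j
  have key : ∀ α : ℝ, rcDot ω (fun j => grad (fun w => ψ w (α • ω)) 0 j / ψ 0 (α • ω))
      = F' α / F α + Complex.I * (s : ℂ) := by
    intro α
    have hcm : Measurable (fun a => (∑ k, (α • ω) k * (X₀ a k + X₂ a k) : ℝ)) :=
      Finset.measurable_sum _ fun k _ => measurable_const.mul
        (((measurable_pi_apply k).comp hX₀).add ((measurable_pi_apply k).comp hX₂))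
    have hem : Measurable (fun a => Complex.exp
        (Complex.I * ((∑ k, (α • ω) k * (X₀ a k + X₂ a k) : ℝ) : ℂ))) :=
      (measurable_const.mul (Complex.measurable_ofReal.comp hcm)).cexp
    have hGj : ∀ j, Integrable (fun a => Complex.I * ((X₀ a j + X₁ a j : ℝ) : ℂ)
        * Complex.exp (Complex.I * ((∑ k, (α • ω) k * (X₀ a k + X₂ a k) : ℝ) : ℂ))) μ := by
      intro j
      refine Integrable.mono' (((hX₀c j).add (hX₁c j)).abs)
        (((measurable_const.mul (Complex.measurable_ofReal.comp
          (((measurable_pi_apply j).comp hX₀).add ((measurable_pi_apply j).comp hX₁)))).mul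
          hem).aestronglyMeasurable)
        (Filter.Eventually.of_forall fun a => ?_)
      rw [norm_mul, KotAux.norm_exp_I_mul, mul_one, KotAux.norm_I_mul_ofReal]
      exact le_rfl
    have hnum : (∑ j, ((ω j : ℂ) * grad (fun w => ψ w (α • ω)) 0 j))
        = ∫ a, Complex.I * ((∑ k, ω k * (X₀ a k + X₁ a k) : ℝ) : ℂ)
            * Complex.exp (Complex.I
              * ((∑ k, (α • ω) k * (X₀ a k + X₂ a k) : ℝ) : ℂ)) ∂μ := by
      calc ∑ j, ((ω j : ℂ) * grad (fun w => ψ w (α • ω)) 0 j)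
          = ∑ j, ∫ a, (ω j : ℂ) * (Complex.I * ((X₀ a j + X₁ a j : ℝ) : ℂ)
              * Complex.exp (Complex.I
                * ((∑ k, (α • ω) k * (X₀ a k + X₂ a k) : ℝ) : ℂ))) ∂μ := by
            refine Finset.sum_congr rfl fun j _ => ?_
            rw [hgrad α j, ← integral_const_mul]
        _ = ∫ a, ∑ j, (ω j : ℂ) * (Complex.I * ((X₀ a j + X₁ a j : ℝ) : ℂ)
              * Complex.exp (Complex.I
                * ((∑ k, (α • ω) k * (X₀ a k + X₂ a k) : ℝ) : ℂ))) ∂μ :=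
            (integral_finset_sum _ fun j _ => (hGj j).const_mul _).symm
        _ = _ := by
            have hptnum : ∀ a, ∑ j, (ω j : ℂ) * (Complex.I * ((X₀ a j + X₁ a j : ℝ) : ℂ)
                * Complex.exp (Complex.I
                  * ((∑ k, (α • ω) k * (X₀ a k + X₂ a k) : ℝ) : ℂ)))
                = Complex.I * ((∑ k, ω k * (X₀ a k + X₁ a k) : ℝ) : ℂ)
                * Complex.exp (Complex.I
                  * ((∑ k, (α • ω) k * (X₀ a k + X₂ a k) : ℝ) : ℂ)) := by
              intro a
              rw [show ((∑ k, ω k * (X₀ a k + X₁ a k) : ℝ) : ℂ)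
                  = ∑ k, ((ω k : ℂ) * ((X₀ a k + X₁ a k : ℝ) : ℂ)) from by push_cast; rfl]
              rw [Finset.mul_sum, Finset.sum_mul]
              exact Finset.sum_congr rfl fun j _ => by ring
            exact integral_congr_ae (Filter.Eventually.of_forall hptnum)
    have hsum₂ : ∀ a, (∑ k, (α • ω) k * (X₀ a k + X₂ a k))
        = α * (∑ k, ω k * X₀ a k) + α * (∑ k, ω k * X₂ a k) := by
      intro a
      simp only [Pi.smul_apply, smul_eq_mul, mul_add, Finset.sum_add_distrib,
        Finset.mul_sum, mul_assoc]
    have hsum₁ : ∀ a, (∑ k, ω k * (X₀ a k + X₁ a k))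
        = (∑ k, ω k * X₀ a k) + ∑ k, ω k * X₁ a k := by
      intro a
      simp only [mul_add, Finset.sum_add_distrib]
    have hpt2 : ∀ a, Complex.I * ((∑ k, ω k * (X₀ a k + X₁ a k) : ℝ) : ℂ)
          * Complex.exp (Complex.I * ((∑ k, (α • ω) k * (X₀ a k + X₂ a k) : ℝ) : ℂ))
        = (Complex.I * ((∑ k, ω k * X₀ a k : ℝ) : ℂ)
            * Complex.exp (Complex.I * ((α * ∑ k, ω k * X₀ a k : ℝ) : ℂ)))
            * Complex.exp (Complex.I * ((α * ∑ k, ω k * X₂ a k : ℝ) : ℂ))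
          + (Complex.exp (Complex.I * ((α * ∑ k, ω k * X₀ a k : ℝ) : ℂ))
            * Complex.exp (Complex.I * ((α * ∑ k, ω k * X₂ a k : ℝ) : ℂ)))
            * (Complex.I * ((∑ k, ω k * X₁ a k : ℝ) : ℂ)) := by
      intro a
      rw [hsum₁ a, hsum₂ a, Complex.ofReal_add, Complex.ofReal_add, mul_add, mul_add,
        Complex.exp_add]
      ring
    have hem₀ : Measurable (fun a => Complex.exp
        (Complex.I * ((α * ∑ k, ω k * X₀ a k : ℝ) : ℂ))) :=
      (measurable_const.mul (Complex.measurable_ofReal.comp (measurable_const.mul hS₀m))).cexp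
    have hem₂ : Measurable (fun a => Complex.exp
        (Complex.I * ((α * ∑ k, ω k * X₂ a k : ℝ) : ℂ))) :=
      (measurable_const.mul (Complex.measurable_ofReal.comp (measurable_const.mul hS₂m))).cexp
    have i1 : Integrable (fun a => (Complex.I * ((∑ k, ω k * X₀ a k : ℝ) : ℂ)
        * Complex.exp (Complex.I * ((α * ∑ k, ω k * X₀ a k : ℝ) : ℂ)))
        * Complex.exp (Complex.I * ((α * ∑ k, ω k * X₂ a k : ℝ) : ℂ))) μ := by
      refine Integrable.mono' hS₀i.abs
        ((((measurable_const.mul (Complex.measurable_ofReal.comp hS₀m)).mul hem₀).mul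
          hem₂).aestronglyMeasurable)
        (Filter.Eventually.of_forall fun a => ?_)
      rw [norm_mul, norm_mul, KotAux.norm_exp_I_mul, KotAux.norm_exp_I_mul, mul_one,
        mul_one, KotAux.norm_I_mul_ofReal]
    have i2 : Integrable (fun a => (Complex.exp (Complex.I * ((α * ∑ k, ω k * X₀ a k : ℝ) : ℂ))
        * Complex.exp (Complex.I * ((α * ∑ k, ω k * X₂ a k : ℝ) : ℂ)))
        * (Complex.I * ((∑ k, ω k * X₁ a k : ℝ) : ℂ))) μ := by
      refine Integrable.mono' hS₁i.abs
        (((hem₀.mul hem₂).mul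
          (measurable_const.mul (Complex.measurable_ofReal.comp hS₁m))).aestronglyMeasurable)
        (Filter.Eventually.of_forall fun a => ?_)
      rw [norm_mul, norm_mul, KotAux.norm_exp_I_mul, KotAux.norm_exp_I_mul,
        KotAux.norm_I_mul_ofReal]
      simp
    have hum : Measurable (fun x : Fin d → ℝ => Complex.I * ((∑ k, ω k * x k : ℝ) : ℂ)
        * Complex.exp (Complex.I * ((α * ∑ k, ω k * x k : ℝ) : ℂ))) := by
      have hsm : Measurable (fun x : Fin d → ℝ => (∑ k, ω k * x k : ℝ)) :=
        Finset.measurable_sum _ fun k _ => measurable_const.mul (measurable_pi_apply k)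
      exact (measurable_const.mul (Complex.measurable_ofReal.comp hsm)).mul
        ((measurable_const.mul (Complex.measurable_ofReal.comp (measurable_const.mul hsm))).cexp)
    have hvm : Measurable (fun x : Fin d → ℝ =>
        Complex.exp (Complex.I * ((α * ∑ k, ω k * x k : ℝ) : ℂ))) := by
      have hsm : Measurable (fun x : Fin d → ℝ => (∑ k, ω k * x k : ℝ)) :=
        Finset.measurable_sum _ fun k _ => measurable_const.mul (measurable_pi_apply k)
      exact (measurable_const.mul (Complex.measurable_ofReal.comp (measurable_const.mul hsm))).cexp
    have ivX₂ : Integrable (fun a =>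
        Complex.exp (Complex.I * ((α * ∑ k, ω k * X₂ a k : ℝ) : ℂ))) μ :=
      KotAux.int_of_bdd hem₂.aestronglyMeasurable (fun a => le_of_eq (KotAux.norm_exp_I_mul _))
    have ivX₀ : Integrable (fun a =>
        Complex.exp (Complex.I * ((α * ∑ k, ω k * X₀ a k : ℝ) : ℂ))) μ :=
      KotAux.int_of_bdd hem₀.aestronglyMeasurable (fun a => le_of_eq (KotAux.norm_exp_I_mul _))
    have t1 : ∫ a, (Complex.I * ((∑ k, ω k * X₀ a k : ℝ) : ℂ)
        * Complex.exp (Complex.I * ((α * ∑ k, ω k * X₀ a k : ℝ) : ℂ)))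
        * Complex.exp (Complex.I * ((α * ∑ k, ω k * X₂ a k : ℝ) : ℂ)) ∂μ
        = F' α * P₂ α :=
      KotAux.indep_integral_mul (hind02.comp hum hvm) (hF'int α) ivX₂
    have hpairm : Measurable (fun p : (Fin d → ℝ) × (Fin d → ℝ) =>
        Complex.exp (Complex.I * ((α * ∑ k, ω k * p.1 k : ℝ) : ℂ))
          * Complex.exp (Complex.I * ((α * ∑ k, ω k * p.2 k : ℝ) : ℂ))) :=
      (hvm.comp measurable_fst).mul (hvm.comp measurable_snd)
    have hψ₁m : Measurable (fun x : Fin d → ℝ => Complex.I * ((∑ k, ω k * x k : ℝ) : ℂ)) := by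
      have hsm : Measurable (fun x : Fin d → ℝ => (∑ k, ω k * x k : ℝ)) :=
        Finset.measurable_sum _ fun k _ => measurable_const.mul (measurable_pi_apply k)
      exact measurable_const.mul (Complex.measurable_ofReal.comp hsm)
    have ipair : Integrable (fun a =>
        Complex.exp (Complex.I * ((α * ∑ k, ω k * X₀ a k : ℝ) : ℂ))
          * Complex.exp (Complex.I * ((α * ∑ k, ω k * X₂ a k : ℝ) : ℂ))) μ := by
      refine KotAux.int_of_bdd ((hem₀.mul hem₂).aestronglyMeasurable) fun a => ?_
      rw [norm_mul, KotAux.norm_exp_I_mul, KotAux.norm_exp_I_mul, one_mul]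
    have iB : Integrable (fun a => Complex.I * ((∑ k, ω k * X₁ a k : ℝ) : ℂ)) μ := by
      refine Integrable.mono' hS₁i.abs
        ((measurable_const.mul (Complex.measurable_ofReal.comp hS₁m)).aestronglyMeasurable)
        (Filter.Eventually.of_forall fun a => ?_)
      rw [KotAux.norm_I_mul_ofReal]
    have t2a : ∫ a, (Complex.exp (Complex.I * ((α * ∑ k, ω k * X₀ a k : ℝ) : ℂ))
        * Complex.exp (Complex.I * ((α * ∑ k, ω k * X₂ a k : ℝ) : ℂ)))
        * (Complex.I * ((∑ k, ω k * X₁ a k : ℝ) : ℂ)) ∂μ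
        = (∫ a, Complex.exp (Complex.I * ((α * ∑ k, ω k * X₀ a k : ℝ) : ℂ))
            * Complex.exp (Complex.I * ((α * ∑ k, ω k * X₂ a k : ℝ) : ℂ)) ∂μ)
          * ∫ a, Complex.I * ((∑ k, ω k * X₁ a k : ℝ) : ℂ) ∂μ :=
      KotAux.indep_integral_mul (hind02_1.comp hpairm hψ₁m) ipair iB
    have t2b : ∫ a, Complex.exp (Complex.I * ((α * ∑ k, ω k * X₀ a k : ℝ) : ℂ))
        * Complex.exp (Complex.I * ((α * ∑ k, ω k * X₂ a k : ℝ) : ℂ)) ∂μ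
        = F α * P₂ α :=
      KotAux.indep_integral_mul (hind02.comp hvm hvm) ivX₀ ivX₂
    have t3 : ∫ a, Complex.I * ((∑ k, ω k * X₁ a k : ℝ) : ℂ) ∂μ
        = Complex.I * (s : ℂ) := by
      rw [integral_const_mul]
      congr 1
      have h4 : ∫ a, ((∑ k, ω k * X₁ a k : ℝ) : ℂ) ∂μ
          = ((∫ a, (∑ k, ω k * X₁ a k : ℝ) ∂μ : ℝ) : ℂ) := by
        have h5 := Complex.ofRealCLM.integral_comp_comm hS₁i
        simpa using h5
      rw [h4]
      norm_cast
      rw [integral_finset_sum _ (fun k _ => (hX₁c k).const_mul _), hs]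
      exact Finset.sum_congr rfl fun k _ => integral_const_mul _ _
    calc rcDot ω (fun j => grad (fun w => ψ w (α • ω)) 0 j / ψ 0 (α • ω))
        = (∑ j, ((ω j : ℂ) * grad (fun w => ψ w (α • ω)) 0 j)) / ψ 0 (α • ω) := by
          show (∑ j, ((ω j : ℂ) * (grad (fun w => ψ w (α • ω)) 0 j / ψ 0 (α • ω)))) = _
          rw [Finset.sum_div]
          exact Finset.sum_congr rfl fun j _ => (mul_div_assoc _ _ _).symm
      _ = (F' α * P₂ α + (F α * P₂ α) * (Complex.I * (s : ℂ))) / (F α * P₂ α) := by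
          rw [hnum, hψ0 α]
          congr 1
          rw [integral_congr_ae (Filter.Eventually.of_forall hpt2), integral_add i1 i2,
            t1, t2a, t2b, t3]
      _ = F' α / F α + Complex.I * (s : ℂ) := by
          have h1 := hFne α
          have h2 := hP₂ne α
          field_simp
  have hF'cont : Continuous F' := by
    rw [hF'def]
    refine continuous_of_dominated (bound := fun a => |∑ k, ω k * X₀ a k|)
      (fun t => (((measurable_const.mul (Complex.measurable_ofReal.comp hS₀m)).mul
        ((measurable_const.mul (Complex.measurable_ofReal.comp
          (measurable_const.mul hS₀m))).cexp)).aestronglyMeasurable))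
      (fun t => Filter.Eventually.of_forall fun a => ?_) hS₀i.abs
      (Filter.Eventually.of_forall fun a => ?_)
    · rw [norm_mul, KotAux.norm_exp_I_mul, mul_one, KotAux.norm_I_mul_ofReal]
    · have hc : Continuous fun t : ℝ => ((t * ∑ k, ω k * X₀ a k : ℝ) : ℂ) :=
        Complex.continuous_ofReal.comp (continuous_id.mul continuous_const)
      exact continuous_const.mul ((continuous_const.mul hc).cexp)
  have hFcont : Continuous F := by
    have : Differentiable ℝ F := fun t => (hFd t).differentiableAt
    exact this.continuous
  have hqcont : Continuous fun t => F' t / F t := hF'cont.div hFcont hFne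
  set Lf : ℝ → ℂ := fun β => ∫ t in (0:ℝ)..β, F' t / F t with hLdef
  have hLd : ∀ β, HasDerivAt Lf (F' β / F β) β := fun β =>
    intervalIntegral.integral_hasDerivAt_right (hqcont.intervalIntegrable _ _)
      (hqcont.stronglyMeasurableAtFilter _ _) hqcont.continuousAt
  have hHd : ∀ β : ℝ, HasDerivAt (fun β => F β * Complex.exp (-(Lf β))) 0 β := by
    intro β
    have h1 := (hFd β).mul (((hLd β).neg).cexp)
    refine h1.congr_deriv ?_
    have h2 := hFne β
    field_simp
    ring
  have hconst : F 1 * Complex.exp (-(Lf 1)) = F 0 * Complex.exp (-(Lf 0)) :=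
    is_const_of_deriv_eq_zero (fun β => (hHd β).differentiableAt)
      (fun β => (hHd β).deriv) 1 0
  have hF0 : F 0 = 1 := by
    show (∫ a, Complex.exp (Complex.I * ((0 * ∑ k, ω k * X₀ a k : ℝ) : ℂ)) ∂μ) = 1
    simp
  have hL0 : Lf 0 = 0 := intervalIntegral.integral_same
  have hH1 : F 1 * Complex.exp (-(Lf 1)) = 1 := by
    rw [hconst, hF0, hL0]
    simp
  have hF1 : F 1 = Complex.exp (Lf 1) := by
    have h3 := congrArg (fun z => z * Complex.exp (Lf 1)) hH1
    simpa [mul_assoc, ← Complex.exp_add] using h3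
  have hφ₀ω : φ₀ ω = F 1 := by
    rw [hφ₀ ω]
    show _ = ∫ a, Complex.exp (Complex.I * ((1 * ∑ k, ω k * X₀ a k : ℝ) : ℂ)) ∂μ
    exact integral_congr_ae (Filter.Eventually.of_forall fun a => by simp)
  rw [hφ₀ω, hF1,
    intervalIntegral.integral_congr (g := fun α => F' α / F α + Complex.I * (s : ℂ))
      (fun α _ => key α),
    intervalIntegral.integral_add (hqcont.intervalIntegrable _ _) intervalIntegrable_const,
    intervalIntegral.integral_const]
  congr 1
  show Lf 1 = -Complex.I * (s : ℂ)
    + ((∫ t in (0:ℝ)..1, F' t / F t) + ((1:ℝ) - 0) • (Complex.I * (s : ℂ)))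
  rw [show ((∫ t in (0:ℝ)..1, F' t / F t)) = Lf 1 from rfl]
  simp only [sub_zero, one_smul]
  ring
end
end

section
/- Let D = [−1,1]^d. Let ζ be a random vector in ℝ^d supported in [−1/2,1/2]^d and η : Ω × ℝ^d → ℝ a jointly measurable random field, supported in D, with ζ and η independent. Let f : ℝ^d → ℝ be bounded, measurable and supported in [−1/2,1/2]^d. Assume E[η(t)] = 0 for every t ∈ D and ∬_{D×D} E|η(t)η(t')| dt dt' < ∞, as well as ∫_D E|η(t)| dt < ∞. Define y(t) := f(t − ζ) + η(t), y^ft(ω) := ∫_D y(t) e^{−i t·ω} dt and η^ft(ω) := ∫_D η(t) e^{−i t·ω} dt. Then for all ω₁, ω₂ ∈ ℝ^d: E[ y^ft(ω₁) · conj(y^ft(ω₂)) ] = f^ft(ω₁) · conj(f^ft(ω₂)) · E[e^{−i (ω₁−ω₂)·ζ}] + E[ η^ft(ω₁) · conj(η^ft(ω₂)) ]. -/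
open MeasureTheory Complex ProbabilityTheory

noncomputable section

/-- The cube `D = [-1,1]^d`. -/
def Dcube (d : ℕ) : Set (Fin d → ℝ) :=
  Set.Icc (fun _ => (-1 : ℝ)) (fun _ => (1 : ℝ))

namespace MRAaux

def ee {d : ℕ} (ω t : Fin d → ℝ) : ℂ :=
  Complex.exp (-Complex.I * ((∑ j, t j * ω j : ℝ) : ℂ))

lemma ee_meas {d : ℕ} (ω : Fin d → ℝ) : Measurable (ee ω) := by
  apply Complex.measurable_exp.comp
  apply Measurable.const_mul
  exact Complex.measurable_ofReal.comp (Finset.measurable_sum _ fun j _ =>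
    (measurable_pi_apply j).mul_const _)

lemma ee_norm {d : ℕ} (ω t : Fin d → ℝ) : ‖ee ω t‖ = 1 := by
  rw [ee, Complex.norm_exp]
  simp

lemma ee_nnnorm {d : ℕ} (ω t : Fin d → ℝ) : ‖ee ω t‖₊ = 1 :=
  NNReal.coe_injective (by rw [coe_nnnorm, ee_norm]; rfl)

lemma conj_norm (x : ℂ) : ‖(starRingEnd ℂ) x‖ = ‖x‖ := by
  rw [starRingEnd_apply, norm_star]

lemma conj_nnnorm (x : ℂ) : ‖(starRingEnd ℂ) x‖₊ = ‖x‖₊ := by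
  rw [starRingEnd_apply, nnnorm_star]

lemma ee_mul_conj {d : ℕ} (ω₁ ω₂ z : Fin d → ℝ) :
    ee ω₁ z * (starRingEnd ℂ) (ee ω₂ z)
      = Complex.exp (-Complex.I * ((∑ j, (ω₁ j - ω₂ j) * z j : ℝ) : ℂ)) := by
  rw [ee, ee, ← Complex.exp_conj, ← Complex.exp_add]
  congr 1
  have h : ((∑ j, (ω₁ j - ω₂ j) * z j : ℝ) : ℂ)
      = ((∑ j, z j * ω₁ j : ℝ) : ℂ) - ((∑ j, z j * ω₂ j : ℝ) : ℂ) := by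
    push_cast
    rw [← Finset.sum_sub_distrib]
    congr 1
    funext j
    ring
  rw [h]
  simp only [map_mul, map_neg, Complex.conj_I, Complex.conj_ofReal]
  ring

lemma ee_add {d : ℕ} (ω s z : Fin d → ℝ) : ee ω (s + z) = ee ω s * ee ω z := by
  rw [ee, ee, ee, ← Complex.exp_add]
  congr 1
  have h : (∑ j, (s + z) j * ω j : ℝ) = (∑ j, s j * ω j) + (∑ j, z j * ω j) := by
    rw [← Finset.sum_add_distrib]
    congr 1
    funext j
    simp [Pi.add_apply]
    ring
  rw [h]
  push_cast
  ring

lemma hnn {d : ℕ} (r : ℝ) (ω t : Fin d → ℝ) :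
    (‖(r : ℂ) * ee ω t‖₊ : ENNReal) = ENNReal.ofReal |r| := by
  rw [← enorm_eq_nnnorm, ← ofReal_norm, norm_mul, ee_norm, mul_one, Complex.norm_real,
    Real.norm_eq_abs]

lemma shift_integral {d : ℕ} (f : (Fin d → ℝ) → ℝ)
    (hf_supp : ∀ t : Fin d → ℝ,
      t ∉ Set.Icc (fun _ => -(1/2 : ℝ)) (fun _ => (1/2 : ℝ)) → f t = 0)
    (ω z : Fin d → ℝ)
    (hz : z ∈ Set.Icc (fun _ => -(1/2 : ℝ)) (fun _ => (1/2 : ℝ))) :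
    ∫ t in Dcube d, ((f (t - z) : ℝ) : ℂ) * ee ω t
      = ft (fun t => (f t : ℂ)) ω * ee ω z := by
  have hsupp : ∀ t : Fin d → ℝ, t ∉ Dcube d → ((f (t - z) : ℝ) : ℂ) * ee ω t = 0 := by
    intro t ht
    have : f (t - z) = 0 := by
      apply hf_supp
      intro hmem
      apply ht
      rw [Dcube, Set.mem_Icc]
      constructor
      · intro j
        have h1 : -(1/2 : ℝ) ≤ t j - z j := hmem.1 j
        have h2 : -(1/2 : ℝ) ≤ z j := hz.1 j
        show (-1 : ℝ) ≤ t j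
        linarith
      · intro j
        have h1 : t j - z j ≤ (1/2 : ℝ) := hmem.2 j
        have h2 : z j ≤ (1/2 : ℝ) := hz.2 j
        show t j ≤ (1 : ℝ)
        linarith
    rw [this]
    simp
  rw [setIntegral_eq_integral_of_forall_compl_eq_zero hsupp]
  have key : (fun t => ((f (t - z) : ℝ) : ℂ) * ee ω t)
      = fun t => (fun s => ((f s : ℝ) : ℂ) * ee ω (s + z)) (t - z) := by
    funext t
    simp [sub_add_cancel]
  rw [key, integral_sub_right_eq_self (fun s => ((f s : ℝ) : ℂ) * ee ω (s + z)) z]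
  have key2 : (fun s => ((f s : ℝ) : ℂ) * ee ω (s + z))
      = fun s => (((f s : ℝ) : ℂ) * ee ω s) * ee ω z := by
    funext s
    rw [ee_add]
    ring
  rw [key2, integral_mul_const]
  rfl

lemma integral_mul_indep {Ω : Type*} [MeasurableSpace Ω] {μ : Measure Ω}
    (z : Ω → ℂ) (X : Ω → ℝ) (hz : Integrable z μ) (hX : Integrable X μ)
    (hzX : Integrable (fun a => z a * (X a : ℂ)) μ)
    (h : IndepFun z X μ) :
    ∫ a, z a * (X a : ℂ) ∂μ = (∫ a, z a ∂μ) * ((∫ a, X a ∂μ : ℝ) : ℂ) := by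
  have hre : IndepFun (fun a => (z a).re) X μ := h.comp Complex.measurable_re measurable_id
  have him : IndepFun (fun a => (z a).im) X μ := h.comp Complex.measurable_im measurable_id
  have hsmre : AEStronglyMeasurable (fun a => (z a).re) μ :=
    (Complex.measurable_re.comp_aemeasurable hz.aemeasurable).aestronglyMeasurable
  have hsmim : AEStronglyMeasurable (fun a => (z a).im) μ :=
    (Complex.measurable_im.comp_aemeasurable hz.aemeasurable).aestronglyMeasurable
  have e1 : ∫ a, ((fun a => (z a).re) * X) a ∂μ
      = (∫ a, (z a).re ∂μ) * ∫ a, X a ∂μ := hre.integral_mul_eq_mul_integral hsmre hX.1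
  have e2 : ∫ a, ((fun a => (z a).im) * X) a ∂μ
      = (∫ a, (z a).im ∂μ) * ∫ a, X a ∂μ := him.integral_mul_eq_mul_integral hsmim hX.1
  simp only [Pi.mul_apply] at e1 e2
  apply Complex.ext
  · have h3 := integral_re (𝕜 := ℂ) hzX
    simp only [RCLike.re_to_complex] at h3
    rw [← h3]
    simp only [Complex.mul_re, Complex.ofReal_re, Complex.ofReal_im, mul_zero, sub_zero]
    rw [e1]
    congr 1
    have h4 := integral_re (𝕜 := ℂ) hz
    simp only [RCLike.re_to_complex] at h4
    rw [h4]
  · have h3 := integral_im (𝕜 := ℂ) hzX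
    simp only [RCLike.im_to_complex] at h3
    rw [← h3]
    simp only [Complex.mul_im, Complex.ofReal_re, Complex.ofReal_im, mul_zero, zero_add]
    rw [e2]
    congr 1
    have h4 := integral_im (𝕜 := ℂ) hz
    simp only [RCLike.im_to_complex] at h4
    rw [h4]

end MRAaux

open MRAaux

/-- **Second-order statistics of the MRA observation in the Fourier domain.**
For `y(t) = f(t - ζ) + η(t)` with `ζ` and the centered noise field `η` independent,
`E[y^ft(ω₁) conj(y^ft(ω₂))] = f^ft(ω₁) conj(f^ft(ω₂)) E[e^{-i(ω₁-ω₂)·ζ}]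
  + E[η^ft(ω₁) conj(η^ft(ω₂))]`. -/
theorem mra_second_order_statistics
    (d : ℕ)
    (Ω : Type*) [MeasurableSpace Ω] (μ : Measure Ω) [IsProbabilityMeasure μ]
    (ζ : Ω → Fin d → ℝ) (hζ_meas : Measurable ζ)
    (hζ_supp : ∀ᵐ a ∂μ, ζ a ∈ Set.Icc (fun _ => -(1/2 : ℝ)) (fun _ => (1/2 : ℝ)))
    (η : Ω → (Fin d → ℝ) → ℝ)
    (hη_meas : Measurable (Function.uncurry η))
    (hη_supp : ∀ a : Ω, ∀ t : Fin d → ℝ, t ∉ Dcube d → η a t = 0)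
    (hindep : IndepFun ζ η μ)
    (f : (Fin d → ℝ) → ℝ) (hf_meas : Measurable f)
    (M : ℝ) (hf_bdd : ∀ t, |f t| ≤ M)
    (hf_supp : ∀ t : Fin d → ℝ,
      t ∉ Set.Icc (fun _ => -(1/2 : ℝ)) (fun _ => (1/2 : ℝ)) → f t = 0)
    (hη_mean : ∀ t ∈ Dcube d, (∫ a, η a t ∂μ) = 0)
    (hη_int2 : (∫⁻ q in (Dcube d) ×ˢ (Dcube d),
        ∫⁻ a, ENNReal.ofReal |η a q.1 * η a q.2| ∂μ) < ⊤)
    (hη_int1 : (∫⁻ t in Dcube d, ∫⁻ a, ENNReal.ofReal |η a t| ∂μ) < ⊤)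
    (yft ηft : Ω → (Fin d → ℝ) → ℂ)
    (hyft : ∀ a : Ω, ∀ ω : Fin d → ℝ,
      yft a ω = ∫ t in Dcube d,
        ((f (t - ζ a) + η a t : ℝ) : ℂ) * Complex.exp (-Complex.I * ((∑ j, t j * ω j : ℝ) : ℂ)))
    (hηft : ∀ a : Ω, ∀ ω : Fin d → ℝ,
      ηft a ω = ∫ t in Dcube d,
        ((η a t : ℝ) : ℂ) * Complex.exp (-Complex.I * ((∑ j, t j * ω j : ℝ) : ℂ))) :
    ∀ ω₁ ω₂ : Fin d → ℝ,
      (∫ a, yft a ω₁ * (starRingEnd ℂ) (yft a ω₂) ∂μ) =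
        ft (fun t => (f t : ℂ)) ω₁ * (starRingEnd ℂ) (ft (fun t => (f t : ℂ)) ω₂) *
          (∫ a, Complex.exp (-Complex.I * ((∑ j, (ω₁ j - ω₂ j) * ζ a j : ℝ) : ℂ)) ∂μ) +
        (∫ a, ηft a ω₁ * (starRingEnd ℂ) (ηft a ω₂) ∂μ) := by
  intro ω₁ ω₂
  classical
  -- restated hypotheses in terms of `ee`
  have hyft' : ∀ a : Ω, ∀ ω : Fin d → ℝ,
      yft a ω = ∫ t in Dcube d, ((f (t - ζ a) + η a t : ℝ) : ℂ) * ee ω t := hyft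
  have hηft' : ∀ a : Ω, ∀ ω : Fin d → ℝ,
      ηft a ω = ∫ t in Dcube d, ((η a t : ℝ) : ℂ) * ee ω t := hηft
  have hD : MeasurableSet (Dcube d) := measurableSet_Icc
  have hDfin : volume (Dcube d) < ⊤ := by
    rw [Dcube]
    exact IsCompact.measure_lt_top isCompact_Icc
  haveI : IsFiniteMeasure (volume.restrict (Dcube d)) :=
    ⟨by rwa [Measure.restrict_apply_univ]⟩
  have hηabs : Measurable fun p : Ω × (Fin d → ℝ) => ENNReal.ofReal |η p.1 p.2| :=
    hη_meas.abs.ennreal_ofReal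
  set K : Ω → ENNReal := fun a => ∫⁻ t in Dcube d, ENNReal.ofReal |η a t| with hKdef
  have hK_meas : Measurable K := hηabs.lintegral_prod_right'
  have hK_fin : ∫⁻ a, K a ∂μ < ⊤ := by
    rw [hKdef]
    rw [lintegral_lintegral_swap hηabs.aemeasurable]
    exact hη_int1
  have hηsec : ∀ a : Ω, Measurable fun t => η a t :=
    fun a => hη_meas.comp measurable_prodMk_left
  -- measurability and integrability of `ηft · ω`
  have hηfm : ∀ ω : Fin d → ℝ, AEStronglyMeasurable (fun a => ηft a ω) μ := by
    intro ω
    have heq : (fun a => ηft a ω) = fun a => ∫ t in Dcube d, ((η a t : ℝ) : ℂ) * ee ω t :=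
      funext fun a => hηft' a ω
    rw [heq]
    exact (StronglyMeasurable.integral_prod_right'
      (f := fun p : Ω × (Fin d → ℝ) => ((η p.1 p.2 : ℝ) : ℂ) * ee ω p.2)
      (((Complex.measurable_ofReal.comp hη_meas).mul
        ((ee_meas ω).comp measurable_snd)).stronglyMeasurable)).aestronglyMeasurable
  have hbound : ∀ (a : Ω) (ω : Fin d → ℝ), (‖ηft a ω‖₊ : ENNReal) ≤ K a := by
    intro a ω
    rw [hηft' a ω]
    calc (‖∫ t in Dcube d, ((η a t : ℝ) : ℂ) * ee ω t‖₊ : ENNReal)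
        ≤ ∫⁻ t in Dcube d, ‖((η a t : ℝ) : ℂ) * ee ω t‖₊ :=
          enorm_integral_le_lintegral_enorm _
      _ = K a := lintegral_congr fun t => hnn (η a t) ω t
  have hηft_int : ∀ ω : Fin d → ℝ, Integrable (fun a => ηft a ω) μ :=
    fun ω => ⟨hηfm ω, lt_of_le_of_lt (lintegral_mono fun a => hbound a ω) hK_fin⟩
  -- finiteness of `∫ K * K`
  have hKK : ∫⁻ a, K a * K a ∂μ < ⊤ := by
    have hmeasq : Measurable fun p : ((Fin d → ℝ) × (Fin d → ℝ)) × Ω =>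
        ENNReal.ofReal |η p.2 p.1.1 * η p.2 p.1.2| := by
      apply Measurable.ennreal_ofReal
      apply Measurable.abs
      exact (hη_meas.comp (measurable_snd.prodMk measurable_fst.fst)).mul
        (hη_meas.comp (measurable_snd.prodMk measurable_fst.snd))
    have hper : ∀ a : Ω, (∫⁻ q in (Dcube d) ×ˢ (Dcube d),
        ENNReal.ofReal |η a q.1 * η a q.2|) = K a * K a := by
      intro a
      rw [Measure.volume_eq_prod, ← Measure.prod_restrict]
      have heq : ∀ q : (Fin d → ℝ) × (Fin d → ℝ),
          ENNReal.ofReal |η a q.1 * η a q.2|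
            = ENNReal.ofReal |η a q.1| * ENNReal.ofReal |η a q.2| := fun q => by
        rw [abs_mul, ENNReal.ofReal_mul (abs_nonneg _)]
      rw [lintegral_congr heq]
      exact lintegral_prod_mul ((hηsec a).abs.ennreal_ofReal).aemeasurable
        ((hηsec a).abs.ennreal_ofReal).aemeasurable
    calc ∫⁻ a, K a * K a ∂μ
        = ∫⁻ a, (∫⁻ q in (Dcube d) ×ˢ (Dcube d),
            ENNReal.ofReal |η a q.1 * η a q.2|) ∂μ := lintegral_congr fun a => (hper a).symm
      _ = ∫⁻ q in (Dcube d) ×ˢ (Dcube d),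
            ∫⁻ a, ENNReal.ofReal |η a q.1 * η a q.2| ∂μ :=
          (lintegral_lintegral_swap hmeasq.aemeasurable).symm
      _ < ⊤ := hη_int2
  -- integrability of the noise product term
  have hη2_int : Integrable (fun a => ηft a ω₁ * (starRingEnd ℂ) (ηft a ω₂)) μ := by
    refine ⟨(hηfm ω₁).mul (RCLike.continuous_conj.comp_aestronglyMeasurable (hηfm ω₂)), ?_⟩
    refine lt_of_le_of_lt (lintegral_mono fun a => ?_) hKK
    calc (‖ηft a ω₁ * (starRingEnd ℂ) (ηft a ω₂)‖₊ : ENNReal)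
        = (‖ηft a ω₁‖₊ : ENNReal) * (‖ηft a ω₂‖₊ : ENNReal) := by
          rw [nnnorm_mul, conj_nnnorm, ENNReal.coe_mul]
      _ ≤ K a * K a := mul_le_mul' (hbound a ω₁) (hbound a ω₂)
  -- the cross terms vanish
  have hcross : ∀ g : (Fin d → ℝ) → ℂ, Measurable g → (∀ v, ‖g v‖ ≤ 1) →
      ∀ w : (Fin d → ℝ) → ℂ, Measurable w → (∀ t, ‖w t‖ ≤ 1) →
      ∫ a, g (ζ a) * (∫ t in Dcube d, ((η a t : ℝ) : ℂ) * w t) ∂μ = 0 := by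
    intro g hg hgb w hw hwb
    have hFu : Integrable (Function.uncurry fun a t =>
        g (ζ a) * (((η a t : ℝ) : ℂ) * w t)) (μ.prod (volume.restrict (Dcube d))) := by
      constructor
      · exact (((hg.comp hζ_meas).comp measurable_fst).mul
          ((Complex.measurable_ofReal.comp hη_meas).mul
            (hw.comp measurable_snd))).aestronglyMeasurable
      · have hle : ∀ p : Ω × (Fin d → ℝ),
            (‖g (ζ p.1) * (((η p.1 p.2 : ℝ) : ℂ) * w p.2)‖₊ : ENNReal)
              ≤ ENNReal.ofReal |η p.1 p.2| := by
          intro p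
          rw [← enorm_eq_nnnorm, ← ofReal_norm]
          refine ENNReal.ofReal_le_ofReal ?_
          calc ‖g (ζ p.1) * (((η p.1 p.2 : ℝ) : ℂ) * w p.2)‖
              = ‖g (ζ p.1)‖ * (‖((η p.1 p.2 : ℝ) : ℂ)‖ * ‖w p.2‖) := by
                rw [norm_mul, norm_mul]
            _ ≤ 1 * (|η p.1 p.2| * 1) := by
                rw [Complex.norm_real, Real.norm_eq_abs]
                have h1 := hgb (ζ p.1)
                have h2 := hwb p.2
                have h3 : (0:ℝ) ≤ |η p.1 p.2| := abs_nonneg _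
                have h4 : |η p.1 p.2| * ‖w p.2‖ ≤ |η p.1 p.2| * 1 :=
                  mul_le_mul_of_nonneg_left h2 h3
                exact mul_le_mul h1 h4 (by positivity) zero_le_one
            _ = |η p.1 p.2| := by ring
        refine lt_of_le_of_lt (lintegral_mono hle) ?_
        rw [lintegral_prod _ hηabs.aemeasurable]
        exact hK_fin
    have hswap := integral_integral_swap hFu
    have hmul : (fun a => g (ζ a) * (∫ t in Dcube d, ((η a t : ℝ) : ℂ) * w t))
        = fun a => ∫ t in Dcube d, g (ζ a) * (((η a t : ℝ) : ℂ) * w t) := by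
      funext a
      rw [integral_const_mul]
    rw [hmul, hswap]
    have hae : ∀ᵐ t ∂(volume.restrict (Dcube d)),
        (∫ a, g (ζ a) * (((η a t : ℝ) : ℂ) * w t) ∂μ) = 0 := by
      have h1 : ∀ᵐ t ∂(volume.restrict (Dcube d)),
          ∫⁻ a, ENNReal.ofReal |η a t| ∂μ < ⊤ := by
        refine ae_lt_top ?_ hη_int1.ne
        exact hηabs.lintegral_prod_left'
      have h2 : ∀ᵐ t ∂(volume.restrict (Dcube d)), t ∈ Dcube d := ae_restrict_mem hD
      filter_upwards [h1, h2] with t hfin htD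
      have hXm : Measurable fun a => η a t :=
        hη_meas.comp (measurable_id.prodMk measurable_const)
      have hXint : Integrable (fun a => η a t) μ := by
        refine ⟨hXm.aestronglyMeasurable, ?_⟩
        have : ∀ a : Ω, (‖η a t‖₊ : ENNReal) = ENNReal.ofReal |η a t| := fun a =>
          Real.enorm_eq_ofReal_abs _
        calc ∫⁻ a, (‖η a t‖₊ : ENNReal) ∂μ
            = ∫⁻ a, ENNReal.ofReal |η a t| ∂μ := lintegral_congr this
          _ < ⊤ := hfin
      have hzm : Measurable fun v : Fin d → ℝ => w t * g v := (hg.const_mul _)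
      have hzb : ∀ a : Ω, ‖w t * g (ζ a)‖ ≤ 1 := by
        intro a
        rw [norm_mul]
        calc ‖w t‖ * ‖g (ζ a)‖ ≤ 1 * 1 := by
              gcongr <;> [exact hwb t; exact hgb _]
          _ = 1 := one_mul 1
      have hzint : Integrable (fun a => w t * g (ζ a)) μ :=
        (integrable_const (1 : ℝ)).mono'
          ((hzm.comp hζ_meas).aestronglyMeasurable) (ae_of_all _ hzb)
      have hzXint : Integrable (fun a => (w t * g (ζ a)) * ((η a t : ℝ) : ℂ)) μ :=
        Integrable.bdd_mul hXint.ofReal ((hzm.comp hζ_meas).aestronglyMeasurable)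
          (ae_of_all _ hzb)
      have hind : IndepFun (fun a => w t * g (ζ a)) (fun a => η a t) μ :=
        hindep.comp hzm (measurable_pi_apply t)
      have hkey := integral_mul_indep (μ := μ) (fun a => w t * g (ζ a)) (fun a => η a t)
        hzint hXint hzXint hind
      have : (fun a => g (ζ a) * (((η a t : ℝ) : ℂ) * w t))
          = fun a => (w t * g (ζ a)) * ((η a t : ℝ) : ℂ) := by
        funext a; ring
      rw [this, hkey, hη_mean t htD]
      simp
    calc ∫ t in Dcube d, (∫ a, g (ζ a) * (((η a t : ℝ) : ℂ) * w t) ∂μ)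
        = ∫ t in Dcube d, (0 : ℂ) := integral_congr_ae hae
      _ = 0 := integral_zero _ _
  -- decomposition of yft
  have hy : ∀ᵐ a ∂μ, ∀ ω : Fin d → ℝ,
      yft a ω = ft (fun t => (f t : ℂ)) ω * ee ω (ζ a) + ηft a ω := by
    filter_upwards [hζ_supp, ae_lt_top hK_meas hK_fin.ne] with a haζ haK
    intro ω
    have hmη := hηsec a
    have hint2 : Integrable (fun t => ((η a t : ℝ) : ℂ) * ee ω t)
        (volume.restrict (Dcube d)) := by
      refine ⟨((Complex.measurable_ofReal.comp hmη).mul (ee_meas ω)).aestronglyMeasurable, ?_⟩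
      calc ∫⁻ t in Dcube d, (‖((η a t : ℝ) : ℂ) * ee ω t‖₊ : ENNReal)
          = K a := lintegral_congr fun t => hnn (η a t) ω t
        _ < ⊤ := haK
    have hint1 : Integrable (fun t => ((f (t - ζ a) : ℝ) : ℂ) * ee ω t)
        (volume.restrict (Dcube d)) := by
      refine (integrable_const M).mono' ?_ (ae_of_all _ ?_)
      · exact ((Complex.measurable_ofReal.comp
          (hf_meas.comp (measurable_id.sub measurable_const))).mul
          (ee_meas ω)).aestronglyMeasurable
      · intro t
        rw [norm_mul, Complex.norm_real, Real.norm_eq_abs, ee_norm, mul_one]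
        exact hf_bdd _
    rw [hyft' a ω, hηft' a ω]
    have hsplit : (fun t => ((f (t - ζ a) + η a t : ℝ) : ℂ) * ee ω t)
        = fun t => ((f (t - ζ a) : ℝ) : ℂ) * ee ω t + ((η a t : ℝ) : ℂ) * ee ω t := by
      funext t
      push_cast
      ring
    rw [hsplit, integral_add hint1 hint2, shift_integral f hf_supp ω (ζ a) haζ]
  -- conj of ηft
  have hconj_eq : ∀ a : Ω, (starRingEnd ℂ) (ηft a ω₂)
      = ∫ t in Dcube d, ((η a t : ℝ) : ℂ) * (starRingEnd ℂ) (ee ω₂ t) := by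
    intro a
    rw [hηft' a ω₂, ← integral_conj]
    congr 1
    funext t
    rw [map_mul, Complex.conj_ofReal]
  set c₁ := ft (fun t => (f t : ℂ)) ω₁ with hc₁
  set c₂ := ft (fun t => (f t : ℂ)) ω₂ with hc₂
  have hconj_ee_meas : Measurable fun v => (starRingEnd ℂ) (ee ω₂ v) :=
    RCLike.continuous_conj.measurable.comp (ee_meas ω₂)
  have hconj_ee_norm : ∀ v, ‖(starRingEnd ℂ) (ee ω₂ v)‖ ≤ 1 := fun v => by
    rw [conj_norm, ee_norm]
  have hZ1m : AEStronglyMeasurable (fun a => ee ω₁ (ζ a)) μ :=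
    ((ee_meas ω₁).comp hζ_meas).aestronglyMeasurable
  have hZ2cm : AEStronglyMeasurable (fun a => (starRingEnd ℂ) (ee ω₂ (ζ a))) μ :=
    (hconj_ee_meas.comp hζ_meas).aestronglyMeasurable
  have hA_int : Integrable
      (fun a => (c₁ * (starRingEnd ℂ) c₂) * (ee ω₁ (ζ a) * (starRingEnd ℂ) (ee ω₂ (ζ a)))) μ := by
    refine (integrable_const (‖c₁ * (starRingEnd ℂ) c₂‖)).mono'
      (aestronglyMeasurable_const.mul (hZ1m.mul hZ2cm)) (ae_of_all _ fun a => ?_)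
    simp only [norm_mul, conj_norm, ee_norm, mul_one]
    exact le_refl _
  have hB_int : Integrable
      (fun a => (c₁ * ee ω₁ (ζ a)) * (starRingEnd ℂ) (ηft a ω₂)) μ := by
    have hconj_int : Integrable (fun a => (starRingEnd ℂ) (ηft a ω₂)) μ := by
      refine ⟨RCLike.continuous_conj.comp_aestronglyMeasurable (hηfm ω₂), ?_⟩
      have heq : ∀ a : Ω, (‖(starRingEnd ℂ) (ηft a ω₂)‖₊ : ENNReal)
          = (‖ηft a ω₂‖₊ : ENNReal) := fun a => by rw [conj_nnnorm]
      calc ∫⁻ a, (‖(starRingEnd ℂ) (ηft a ω₂)‖₊ : ENNReal) ∂μ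
          = ∫⁻ a, (‖ηft a ω₂‖₊ : ENNReal) ∂μ := lintegral_congr heq
        _ < ⊤ := (hηft_int ω₂).2
    exact hconj_int.bdd_mul (aestronglyMeasurable_const.mul hZ1m)
      (c := ‖c₁‖) (ae_of_all _ fun a => by rw [norm_mul, ee_norm, mul_one])
  have hC_int : Integrable
      (fun a => ((starRingEnd ℂ) c₂ * (starRingEnd ℂ) (ee ω₂ (ζ a))) * ηft a ω₁) μ :=
    (hηft_int ω₁).bdd_mul (aestronglyMeasurable_const.mul hZ2cm)
      (c := ‖c₂‖) (ae_of_all _ fun a => by rw [norm_mul, conj_norm, conj_norm, ee_norm, mul_one])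
  have hmain : ∫ a, yft a ω₁ * (starRingEnd ℂ) (yft a ω₂) ∂μ
      = (∫ a, (c₁ * (starRingEnd ℂ) c₂) * (ee ω₁ (ζ a) * (starRingEnd ℂ) (ee ω₂ (ζ a))) ∂μ)
        + (∫ a, (c₁ * ee ω₁ (ζ a)) * (starRingEnd ℂ) (ηft a ω₂) ∂μ)
        + (∫ a, ((starRingEnd ℂ) c₂ * (starRingEnd ℂ) (ee ω₂ (ζ a))) * ηft a ω₁ ∂μ)
        + (∫ a, ηft a ω₁ * (starRingEnd ℂ) (ηft a ω₂) ∂μ) := by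
    have hcongr : ∫ a, yft a ω₁ * (starRingEnd ℂ) (yft a ω₂) ∂μ
        = ∫ a, ((c₁ * (starRingEnd ℂ) c₂) * (ee ω₁ (ζ a) * (starRingEnd ℂ) (ee ω₂ (ζ a)))
            + (c₁ * ee ω₁ (ζ a)) * (starRingEnd ℂ) (ηft a ω₂)
            + ((starRingEnd ℂ) c₂ * (starRingEnd ℂ) (ee ω₂ (ζ a))) * ηft a ω₁
            + ηft a ω₁ * (starRingEnd ℂ) (ηft a ω₂)) ∂μ := by
      refine integral_congr_ae ?_
      filter_upwards [hy] with a ha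
      rw [ha ω₁, ha ω₂, ← hc₁, ← hc₂]
      simp only [map_add, map_mul]
      ring
    have i1 : Integrable (fun a =>
        (c₁ * (starRingEnd ℂ) c₂) * (ee ω₁ (ζ a) * (starRingEnd ℂ) (ee ω₂ (ζ a)))
          + (c₁ * ee ω₁ (ζ a)) * (starRingEnd ℂ) (ηft a ω₂)) μ := hA_int.add hB_int
    have i2 : Integrable (fun a =>
        (c₁ * (starRingEnd ℂ) c₂) * (ee ω₁ (ζ a) * (starRingEnd ℂ) (ee ω₂ (ζ a)))
          + (c₁ * ee ω₁ (ζ a)) * (starRingEnd ℂ) (ηft a ω₂)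
          + ((starRingEnd ℂ) c₂ * (starRingEnd ℂ) (ee ω₂ (ζ a))) * ηft a ω₁) μ :=
      i1.add hC_int
    rw [hcongr, integral_add i2 hη2_int, integral_add i1 hC_int, integral_add hA_int hB_int]
  have hAval : (∫ a, (c₁ * (starRingEnd ℂ) c₂) * (ee ω₁ (ζ a) * (starRingEnd ℂ) (ee ω₂ (ζ a))) ∂μ)
      = c₁ * (starRingEnd ℂ) c₂ *
        ∫ a, Complex.exp (-Complex.I * ((∑ j, (ω₁ j - ω₂ j) * ζ a j : ℝ) : ℂ)) ∂μ := by
    rw [integral_const_mul]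
    congr 1
    refine integral_congr_ae (ae_of_all _ fun a => ?_)
    exact ee_mul_conj ω₁ ω₂ (ζ a)
  have hBval : (∫ a, (c₁ * ee ω₁ (ζ a)) * (starRingEnd ℂ) (ηft a ω₂) ∂μ) = 0 := by
    have heq : (fun a => (c₁ * ee ω₁ (ζ a)) * (starRingEnd ℂ) (ηft a ω₂))
        = fun a => c₁ * (ee ω₁ (ζ a) *
            (∫ t in Dcube d, ((η a t : ℝ) : ℂ) * (starRingEnd ℂ) (ee ω₂ t))) := by
      funext a
      rw [hconj_eq a]
      ring
    rw [heq, integral_const_mul]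
    have h0 : (∫ a, ee ω₁ (ζ a) *
        (∫ t in Dcube d, ((η a t : ℝ) : ℂ) * (starRingEnd ℂ) (ee ω₂ t)) ∂μ) = 0 :=
      hcross (ee ω₁) (ee_meas ω₁) (fun v => le_of_eq (ee_norm ω₁ v))
        (fun t => (starRingEnd ℂ) (ee ω₂ t)) hconj_ee_meas hconj_ee_norm
    rw [h0, mul_zero]
  have hCval : (∫ a, ((starRingEnd ℂ) c₂ * (starRingEnd ℂ) (ee ω₂ (ζ a))) * ηft a ω₁ ∂μ) = 0 := by
    have heq : (fun a => ((starRingEnd ℂ) c₂ * (starRingEnd ℂ) (ee ω₂ (ζ a))) * ηft a ω₁)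
        = fun a => (starRingEnd ℂ) c₂ * ((starRingEnd ℂ) (ee ω₂ (ζ a)) *
            (∫ t in Dcube d, ((η a t : ℝ) : ℂ) * ee ω₁ t)) := by
      funext a
      rw [hηft' a ω₁]
      ring
    rw [heq, integral_const_mul]
    have h0 : (∫ a, (starRingEnd ℂ) (ee ω₂ (ζ a)) *
        (∫ t in Dcube d, ((η a t : ℝ) : ℂ) * ee ω₁ t) ∂μ) = 0 :=
      hcross (fun v => (starRingEnd ℂ) (ee ω₂ v)) hconj_ee_meas hconj_ee_norm
        (ee ω₁) (ee_meas ω₁) (fun t => le_of_eq (ee_norm ω₁ t))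
    rw [h0, mul_zero]
  rw [hmain, hAval, hBval, hCval, add_zero, add_zero]
end
end

section
/- Let p be a positive even integer and let K : ℝ^d → ℝ be integrable with ∫_{ℝ^d} K(t) dt = 1, ∫_{ℝ^d} t^ν K(t) dt = 0 for all multi-indices ν with 1 ≤ |ν| ≤ p−1, and C_K := ∫_{ℝ^d} ‖t‖₂^p |K(t)| dt < ∞. Then for every u ∈ ℝ^d: |K^ft(u) − 1| ≤ (C_K / p!) ‖u‖₂^p. -/
open MeasureTheory Complex

noncomputable section

/-- Euclidean (`ℓ²`) norm on `Fin d → ℝ`. -/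
def en2 {d : ℕ} (ω : Fin d → ℝ) : ℝ :=
  Real.sqrt (∑ j, (ω j) ^ 2)

open Finset

lemma exp_taylor_nonneg (n : ℕ) : ∀ x : ℝ, 0 ≤ x →
    ‖Complex.exp (x * I) - ∑ k ∈ Finset.range n, (x * I) ^ k / k.factorial‖
      ≤ x ^ n / n.factorial := by
  induction n with
  | zero => intro x hx; simp [Complex.norm_exp]
  | succ n ih =>
    intro x hx
    set F : ℝ → ℂ := fun y =>
      Complex.exp (y * I) - ∑ k ∈ Finset.range (n+1), ((y:ℂ) * I) ^ k / k.factorial with hF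
    set F' : ℝ → ℂ := fun y =>
      I * (Complex.exp (y * I) - ∑ k ∈ Finset.range n, ((y:ℂ) * I) ^ k / k.factorial) with hF'
    have hF0 : F 0 = 0 := by
      simp [hF, Finset.sum_range_succ']
    have hderiv : ∀ y : ℝ, HasDerivAt F (F' y) y := by
      intro y
      have hc : HasDerivAt (fun y : ℝ => (y : ℂ) * I) I y := by
        simpa using (hasDerivAt_id y).ofReal_comp.mul_const I
      have hexp : HasDerivAt (fun y : ℝ => Complex.exp ((y:ℂ) * I))
          (Complex.exp ((y:ℂ) * I) * I) y := hc.cexp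
      have hsum : HasDerivAt (fun y : ℝ => ∑ k ∈ Finset.range (n+1), ((y:ℂ) * I) ^ k / k.factorial)
          (∑ k ∈ Finset.range (n+1), (I • ((k:ℂ) * ((y:ℂ) * I) ^ (k-1))) / k.factorial) y := by
        apply HasDerivAt.fun_sum
        intro k _
        exact ((hasDerivAt_pow k ((y:ℂ) * I)).scomp y hc).div_const _
      have key := hexp.fun_sub hsum
      refine key.congr_deriv ?_
      symm
      rw [Finset.sum_range_succ']
      have hterm : ∀ k ∈ Finset.range n,
          (I • (((k+1:ℕ):ℂ) * ((y:ℂ) * I) ^ (k+1-1))) / ((k+1).factorial : ℂ)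
            = I * (((y:ℂ) * I) ^ k / k.factorial) := by
        intro k _
        have hk1 : ((k:ℂ) + 1) ≠ 0 := Nat.cast_add_one_ne_zero k
        have hkf : ((k.factorial : ℂ)) ≠ 0 := by exact_mod_cast Nat.cast_ne_zero.2 k.factorial_ne_zero
        rw [Nat.factorial_succ, smul_eq_mul]
        push_cast
        field_simp
      rw [Finset.sum_congr rfl hterm]
      simp only [hF', Nat.factorial_zero, pow_zero, Nat.cast_zero, zero_mul, smul_zero,
        Nat.cast_one, zero_div, add_zero, mul_sub, Finset.mul_sum]
      ring
    have hcont : Continuous F' := by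
      apply Continuous.mul continuous_const
      apply Continuous.sub
      · exact (Complex.continuous_exp.comp ((Complex.continuous_ofReal.mul continuous_const)))
      · apply continuous_finset_sum
        intro k _
        exact ((Complex.continuous_ofReal.mul continuous_const).pow k).div_const _
    have hftc : ∫ t in (0:ℝ)..x, F' t = F x - F 0 :=
      intervalIntegral.integral_eq_sub_of_hasDerivAt (fun t _ => hderiv t)
        (hcont.intervalIntegrable 0 x)
    have hbound : ‖∫ t in (0:ℝ)..x, F' t‖ ≤ |∫ t in (0:ℝ)..x, t ^ n / n.factorial| := by
      apply intervalIntegral.norm_integral_le_abs_of_norm_le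
      · filter_upwards [MeasureTheory.ae_restrict_mem measurableSet_Ioc] with t ht
        rw [Set.uIoc_of_le hx] at ht
        have ht0 : 0 ≤ t := le_of_lt ht.1
        calc ‖F' t‖ = ‖Complex.exp (t * I) - ∑ k ∈ Finset.range n, ((t:ℂ) * I) ^ k / k.factorial‖ := by
              simp [hF', map_mul]
          _ ≤ t ^ n / n.factorial := ih t ht0
      · exact (Continuous.intervalIntegrable (by continuity) 0 x)
    have hint : ∫ t in (0:ℝ)..x, t ^ n / n.factorial = x ^ (n+1) / ((n+1) * n.factorial) := by
      rw [intervalIntegral.integral_div, integral_pow]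
      have h1 : ((n:ℝ)+1) ≠ 0 := by positivity
      have h2 : ((n.factorial:ℝ)) ≠ 0 := by exact_mod_cast n.factorial_ne_zero
      field_simp
      simp
    have : ‖F x‖ ≤ x ^ (n+1) / ((n+1) * n.factorial) := by
      calc ‖F x‖ = ‖∫ t in (0:ℝ)..x, F' t‖ := by rw [hftc, hF0, sub_zero]
        _ ≤ |∫ t in (0:ℝ)..x, t ^ n / n.factorial| := hbound
        _ = x ^ (n+1) / ((n+1) * n.factorial) := by
            rw [hint, _root_.abs_of_nonneg (by positivity)]
    simpa [hF, Nat.factorial_succ, mul_comm] using this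

lemma exp_taylor_all (n : ℕ) (x : ℝ) :
    ‖Complex.exp (-I * x) - ∑ k ∈ Finset.range n, (-I * x) ^ k / k.factorial‖
      ≤ |x| ^ n / n.factorial := by
  have main : ∀ y : ℝ,
      ‖Complex.exp (y * I) - ∑ k ∈ Finset.range n, ((y:ℂ) * I) ^ k / k.factorial‖
        ≤ |y| ^ n / n.factorial := by
    intro y
    rcases le_or_gt 0 y with h | h
    · rw [_root_.abs_of_nonneg h]; exact exp_taylor_nonneg n y h
    · have hy : 0 ≤ -y := by linarith
      have key := exp_taylor_nonneg n (-y) hy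
      have hconj : Complex.exp ((y:ℂ) * I) - ∑ k ∈ Finset.range n, ((y:ℂ) * I) ^ k / k.factorial
          = (starRingEnd ℂ) (Complex.exp (((-y:ℝ):ℂ) * I)
              - ∑ k ∈ Finset.range n, (((-y:ℝ):ℂ) * I) ^ k / k.factorial) := by
        rw [map_sub, map_sum, ← Complex.exp_conj]
        congr 1
        · congr 1
          simp [Complex.conj_ofReal]
        · apply Finset.sum_congr rfl
          intro k _
          rw [map_div₀, map_pow, map_mul]
          simp [Complex.conj_ofReal]
      rw [hconj, Complex.norm_conj, abs_of_neg h]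
      simpa using key
  have hrw : (-I * (x:ℂ)) = ((-x : ℝ) : ℂ) * I := by push_cast; ring
  rw [hrw]
  simpa using main (-x)

lemma en2_nonneg {d : ℕ} (t : Fin d → ℝ) : 0 ≤ en2 t := Real.sqrt_nonneg _

lemma abs_apply_le_en2 {d : ℕ} (t : Fin d → ℝ) (j : Fin d) : |t j| ≤ en2 t := by
  rw [← Real.sqrt_sq_eq_abs]
  apply Real.sqrt_le_sqrt
  exact Finset.single_le_sum (f := fun j => (t j)^2) (fun i _ => sq_nonneg _) (Finset.mem_univ j)

lemma inner_le_en2 {d : ℕ} (t u : Fin d → ℝ) : |∑ j, t j * u j| ≤ en2 t * en2 u := by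
  have h := Finset.sum_mul_sq_le_sq_mul_sq Finset.univ t u
  have := Real.sqrt_le_sqrt h
  rw [Real.sqrt_sq_eq_abs, Real.sqrt_mul (by positivity)] at this
  exact this

/-- **Taylor bound for a kernel of order `p`.** If `K` has unit mass, vanishing moments
of orders `1,…,p-1`, and finite `p`-th moment `C_K = ∫ ‖t‖₂^p |K(t)| dt`, then
`|K^ft(u) - 1| ≤ (C_K / p!) ‖u‖₂^p` for every `u ∈ ℝ^d`. -/
theorem kernel_ft_taylor_bound
    (d : ℕ) (p : ℕ) (hp_even : Even p) (hp_pos : 0 < p)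
    (K : (Fin d → ℝ) → ℝ) (hK_int : Integrable K)
    (hK_total : (∫ t : Fin d → ℝ, K t) = 1)
    (hK_moments : ∀ ν : Fin d → ℕ, 1 ≤ ∑ j, ν j → ∑ j, ν j ≤ p - 1 →
      (∫ t : Fin d → ℝ, (∏ j, t j ^ ν j) * K t) = 0)
    (CK : ℝ)
    (hCK_int : Integrable (fun t : Fin d → ℝ => en2 t ^ p * |K t|))
    (hCK : (∫ t : Fin d → ℝ, en2 t ^ p * |K t|) = CK) :
    ∀ u : Fin d → ℝ,
      ‖ft (fun t => (K t : ℂ)) u - 1‖ ≤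
        (CK / (Nat.factorial p)) * en2 u ^ p := by
  intro u
  set x : (Fin d → ℝ) → ℝ := fun t => ∑ j, t j * u j with hx
  have hx_cont : Continuous x := continuous_finset_sum _ fun j _ => (continuous_apply j).mul continuous_const
  -- generic integrability lemma
  have int_aux : ∀ (g : (Fin d → ℝ) → ℝ), Continuous g → ∀ (c : ℝ), 0 ≤ c → ∀ (m : ℕ), m ≤ p →
      (∀ t, |g t| ≤ c * en2 t ^ m) → Integrable (fun t => g t * K t) := by
    intro g hg c hc m hm hb
    apply Integrable.mono' (g := fun t => c * (|K t| + en2 t ^ p * |K t|))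
      ((hK_int.abs.add hCK_int).const_mul c)
      (hg.aestronglyMeasurable.mul hK_int.aestronglyMeasurable)
    filter_upwards with t
    show ‖g t * K t‖ ≤ _
    have h1 : |g t * K t| = |g t| * |K t| := abs_mul _ _
    have h2 : en2 t ^ m ≤ 1 + en2 t ^ p := by
      rcases le_or_gt (en2 t) 1 with h | h
      · have := pow_le_one₀ (n := m) (en2_nonneg t) h
        nlinarith [pow_nonneg (en2_nonneg t) p]
      · have := pow_le_pow_right₀ h.le hm
        nlinarith
    rw [Real.norm_eq_abs, h1]
    calc |g t| * |K t| ≤ (c * en2 t ^ m) * |K t| :=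
          mul_le_mul_of_nonneg_right (hb t) (abs_nonneg _)
      _ ≤ (c * (1 + en2 t ^ p)) * |K t| := by
          apply mul_le_mul_of_nonneg_right _ (abs_nonneg _)
          exact mul_le_mul_of_nonneg_left h2 hc
      _ = c * (|K t| + en2 t ^ p * |K t|) := by ring
  -- integrability of monomial moments
  have hnu_int : ∀ ν : Fin d → ℕ, (∑ j, ν j) ≤ p →
      Integrable (fun t => (∏ j, t j ^ ν j) * K t) := by
    intro ν hν
    apply int_aux _ (continuous_finset_prod _ fun j _ => (continuous_apply j).pow _) 1 zero_le_one
      (∑ j, ν j) hν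
    intro t
    rw [one_mul, Finset.abs_prod]
    show _ ≤ en2 t ^ (∑ j, ν j)
    calc ∏ j, |t j ^ ν j| ≤ ∏ j, en2 t ^ ν j := by
          apply Finset.prod_le_prod (fun j _ => abs_nonneg _)
          intro j _
          rw [_root_.abs_pow]
          exact pow_le_pow_left₀ (abs_nonneg _) (abs_apply_le_en2 t j) _
      _ = en2 t ^ (∑ j, ν j) := by rw [Finset.prod_pow_eq_pow_sum]
  -- integrability of powers of x
  have hpoly_int : ∀ k : ℕ, k ≤ p → Integrable (fun t => (x t) ^ k * K t) := by
    intro k hk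
    apply int_aux _ (hx_cont.pow k) (en2 u ^ k) (pow_nonneg (en2_nonneg u) k) k hk
    intro t
    rw [Pi.pow_apply, _root_.abs_pow]
    calc |x t| ^ k ≤ (en2 t * en2 u) ^ k :=
          pow_le_pow_left₀ (abs_nonneg _) (inner_le_en2 t u) k
      _ = en2 u ^ k * en2 t ^ k := by ring
  -- vanishing moments for powers of x
  have hmom : ∀ k : ℕ, 1 ≤ k → k ≤ p - 1 → (∫ t : Fin d → ℝ, (x t) ^ k * K t) = 0 := by
    intro k hk1 hk2
    have hkp : k ≤ p := le_trans hk2 (Nat.sub_le p 1)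
    have hexp : ∀ t : Fin d → ℝ, (x t) ^ k * K t =
        ∑ ν ∈ Finset.piAntidiag Finset.univ k,
          ((Nat.multinomial Finset.univ ν : ℝ) * ∏ j, u j ^ ν j) * ((∏ j, t j ^ ν j) * K t) := by
      intro t
      rw [hx, Finset.sum_pow_eq_sum_piAntidiag, Finset.sum_mul]
      apply Finset.sum_congr rfl
      intro ν _
      have : ∏ j, (t j * u j) ^ ν j = (∏ j, t j ^ ν j) * ∏ j, u j ^ ν j := by
        rw [← Finset.prod_mul_distrib]
        exact Finset.prod_congr rfl fun j _ => mul_pow _ _ _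
      rw [this]; ring
    rw [MeasureTheory.integral_congr_ae (Filter.Eventually.of_forall hexp),
      MeasureTheory.integral_finset_sum]
    · apply Finset.sum_eq_zero
      intro ν hν
      rw [Finset.mem_piAntidiag] at hν
      rw [MeasureTheory.integral_const_mul, hK_moments ν (by rw [hν.1]; exact hk1) (by rw [hν.1]; exact hk2),
        mul_zero]
    · intro ν hν
      rw [Finset.mem_piAntidiag] at hν
      exact ((hnu_int ν (by rw [hν.1]; exact hkp))).const_mul _
  -- pointwise expansion of K * (Taylor sum)
  have hpt : ∀ t : Fin d → ℝ, (K t : ℂ) * ∑ k ∈ Finset.range p, (-I * (x t:ℂ)) ^ k / k.factorial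
      = ∑ k ∈ Finset.range p, ((-I) ^ k / k.factorial) * (((x t) ^ k * K t : ℝ) : ℂ) := by
    intro t
    rw [Finset.mul_sum]
    apply Finset.sum_congr rfl
    intro k _
    push_cast
    ring
  have hS_int : Integrable (fun t : Fin d → ℝ =>
      ∑ k ∈ Finset.range p, ((-I) ^ k / k.factorial) * (((x t) ^ k * K t : ℝ) : ℂ)) :=
    integrable_finset_sum _ fun k hk =>
      ((hpoly_int k (le_of_lt (Finset.mem_range.1 hk))).ofReal.const_mul _)
  have hsum2_int : Integrable (fun t : Fin d → ℝ =>
      (K t : ℂ) * ∑ k ∈ Finset.range p, (-I * (x t:ℂ)) ^ k / k.factorial) :=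
    hS_int.congr (Filter.Eventually.of_forall fun t => (hpt t).symm)
  -- the Taylor-sum integral equals 1
  have hsum_eq : (∫ t : Fin d → ℝ,
      (K t : ℂ) * ∑ k ∈ Finset.range p, (-I * (x t:ℂ)) ^ k / k.factorial) = 1 := by
    rw [integral_congr_ae (Filter.Eventually.of_forall hpt)]
    have hswap := MeasureTheory.integral_finset_sum (μ := (volume : Measure (Fin d → ℝ)))
      (Finset.range p)
      (f := fun k (t : Fin d → ℝ) => ((-I) ^ k / (k.factorial:ℂ)) * (((x t) ^ k * K t : ℝ) : ℂ))
      (fun k hk => ((hpoly_int k (le_of_lt (Finset.mem_range.1 hk))).ofReal.const_mul ((-I) ^ k / (k.factorial:ℂ))))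
    rw [hswap]
    have hterm : ∀ k ∈ Finset.range p,
        (∫ t : Fin d → ℝ, ((-I) ^ k / k.factorial) * (((x t) ^ k * K t : ℝ) : ℂ))
          = ((-I) ^ k / k.factorial) * (((∫ t : Fin d → ℝ, (x t) ^ k * K t) : ℝ) : ℂ) := by
      intro k _
      rw [MeasureTheory.integral_const_mul]
      congr 1
      exact integral_ofReal (𝕜 := ℂ) (f := fun t => x t ^ k * K t)
    rw [Finset.sum_congr rfl hterm, Finset.sum_eq_single 0]
    · have h0 : (∫ t : Fin d → ℝ, (x t) ^ 0 * K t) = 1 := by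
        simp only [pow_zero, one_mul, hK_total]
      rw [h0]
      simp
    · intro k hk hk0
      have hk1 : 1 ≤ k := Nat.one_le_iff_ne_zero.2 hk0
      have hk2 : k ≤ p - 1 := Nat.le_sub_one_of_lt (Finset.mem_range.1 hk)
      rw [hmom k hk1 hk2]
      simp
    · intro h
      exact absurd (Finset.mem_range.2 hp_pos) h
  -- integrability of K * exp
  have hE_int : Integrable (fun t : Fin d → ℝ => (K t : ℂ) * Complex.exp (-I * (x t:ℂ))) := by
    apply Integrable.mono' hK_int.abs
    · exact (Complex.continuous_ofReal.comp_aestronglyMeasurable hK_int.aestronglyMeasurable).mul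
        ((Complex.continuous_exp.comp ((continuous_const.mul
          (Complex.continuous_ofReal.comp hx_cont)))).aestronglyMeasurable)
    · filter_upwards with t
      rw [norm_mul, Complex.norm_real, Complex.norm_exp]
      simp
  -- split the difference
  have hdiff_int : Integrable (fun t : Fin d → ℝ => (K t : ℂ) *
      (Complex.exp (-I * (x t:ℂ)) - ∑ k ∈ Finset.range p, (-I * (x t:ℂ)) ^ k / k.factorial)) :=
    (hE_int.sub hsum2_int).congr (Filter.Eventually.of_forall fun t => by simp only [Pi.sub_apply]; ring)
  have hsplit : ft (fun t => (K t : ℂ)) u - 1 =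
      ∫ t : Fin d → ℝ, (K t : ℂ) *
        (Complex.exp (-I * (x t:ℂ)) - ∑ k ∈ Finset.range p, (-I * (x t:ℂ)) ^ k / k.factorial) := by
    have hft : ft (fun t => (K t : ℂ)) u
        = ∫ t : Fin d → ℝ, (K t : ℂ) * Complex.exp (-I * (x t:ℂ)) := rfl
    rw [hft, ← hsum_eq, ← integral_sub hE_int hsum2_int]
    apply integral_congr_ae
    filter_upwards with t
    ring
  -- final bound
  have hfact_pos : (0:ℝ) < p.factorial := by exact_mod_cast p.factorial_pos
  rw [hsplit]
  calc ‖∫ t : Fin d → ℝ, (K t : ℂ) *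
        (Complex.exp (-I * (x t:ℂ)) - ∑ k ∈ Finset.range p, (-I * (x t:ℂ)) ^ k / k.factorial)‖
      ≤ ∫ t : Fin d → ℝ, ‖(K t : ℂ) *
        (Complex.exp (-I * (x t:ℂ)) - ∑ k ∈ Finset.range p, (-I * (x t:ℂ)) ^ k / k.factorial)‖ :=
        norm_integral_le_integral_norm _
    _ ≤ ∫ t : Fin d → ℝ, (en2 u ^ p / p.factorial) * (en2 t ^ p * |K t|) := by
        apply integral_mono hdiff_int.norm (hCK_int.const_mul _)
        intro t
        dsimp only
        have hE := exp_taylor_all p (x t)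
        have h1 : |x t| ^ p ≤ (en2 t * en2 u) ^ p :=
          pow_le_pow_left₀ (abs_nonneg _) (inner_le_en2 t u) p
        rw [norm_mul, Complex.norm_real, Real.norm_eq_abs]
        calc |K t| * ‖Complex.exp (-I * (x t:ℂ))
              - ∑ k ∈ Finset.range p, (-I * (x t:ℂ)) ^ k / k.factorial‖
            ≤ |K t| * (|x t| ^ p / p.factorial) :=
              mul_le_mul_of_nonneg_left hE (abs_nonneg _)
          _ ≤ |K t| * ((en2 t * en2 u) ^ p / p.factorial) := by
              apply mul_le_mul_of_nonneg_left _ (abs_nonneg _)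
              exact div_le_div_of_nonneg_right h1 hfact_pos.le
          _ = (en2 u ^ p / p.factorial) * (en2 t ^ p * |K t|) := by
              rw [mul_pow]; ring
    _ = (en2 u ^ p / p.factorial) * CK := by
        rw [MeasureTheory.integral_const_mul, hCK]
    _ = CK / p.factorial * en2 u ^ p := by ring
end
end

section
/- Assume the vanishing model assumption (d = 1) with constants β, C, B, ε_max. Then there exist constants c₀ > 0 and c₁ > 0 depending only on β, C, B such that for every h ∈ (0,1), every ε̌ ∈ [0, min(ε_max, c₀ h^{2β})], and every ω ∈ [0, h^{−1}] such that some zero ξ of f^ft satisfies |ω − ξ| ≤ ε̌ and [ξ − ε̌, ξ + ε̌] ⊆ [0, h^{−1}]: the second derivative of the power spectrum satisfies |P''(ω)| ≥ c₁ h^{2β} ‖f‖_∞². -/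
open MeasureTheory Complex

noncomputable section

/-- Fourier transform `f^ft(ω) = ∫_ℝ f(t) e^{-i t ω} dt`. -/
def ftR (f : ℝ → ℝ) (ω : ℝ) : ℂ :=
  ∫ t : ℝ, (f t : ℂ) * Complex.exp (-Complex.I * t * ω)

/-- `‖f‖_∞ = sup_t |f(t)|`. -/
def supNormR (f : ℝ → ℝ) : ℝ :=
  sSup (Set.range fun t => |f t|)

/-- The power spectrum `P(ω) = |f^ft(ω)|²`. -/
def powerSpec (f : ℝ → ℝ) (ω : ℝ) : ℝ :=
  ‖ftR f ω‖ ^ 2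

/-- **The vanishing model assumption (d = 1).**
`f` is bounded, measurable, supported on `[-1/2,1/2]`; `f^ft` is nonvanishing on
`[-1,1]` and for `ω ≥ 1` decomposes as `f^ft(ω) = o_f(ω) ω^{-β}` with an oscillatory
factor `o_f` that is twice differentiable with derivatives bounded by `C‖f‖_∞`; the
zeros of `f^ft` are isolated and simple; and the oscillations are regular: away from
the zeros `|o_f|` is bounded below linearly in the distance, and near the zeros
`|o_f'|` is bounded below. -/
structure VanishingModel (f : ℝ → ℝ) (o : ℝ → ℂ) (β C L B εmax : ℝ) : Prop where
  f_meas : Measurable f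
  f_bdd : ∃ M : ℝ, ∀ t, |f t| ≤ M
  f_supp : ∀ t : ℝ, t ∉ Set.Icc (-(1/2) : ℝ) (1/2 : ℝ) → f t = 0
  beta_ge : 1 ≤ β
  C_pos : 0 < C
  L_pos : 0 < L
  B_pos : 0 < B
  eps_pos : 0 < εmax
  nonvanishing : ∀ ω : ℝ, |ω| ≤ 1 → ftR f ω ≠ 0
  decomposition : ∀ ω : ℝ, 1 ≤ ω → ftR f ω = o ω * ((ω ^ (-β) : ℝ) : ℂ)
  o_diff : Differentiable ℝ o
  o_diff2 : Differentiable ℝ (deriv o)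
  o_bounds : ∀ ℓ : ℕ, ℓ ≤ 2 → ∀ ω : ℝ, 1 ≤ ω →
    ‖iteratedDeriv ℓ o ω‖ ≤ C * supNormR f
  zeros_separated : ∀ ξ ξ' : ℝ, ftR f ξ = 0 → ftR f ξ' = 0 → ξ ≠ ξ' → 1 ≤ |ξ - ξ'|
  zeros_simple : ∀ ξ : ℝ, ftR f ξ = 0 → deriv (ftR f) ξ ≠ 0
  osc_lower : ∀ ε : ℝ, 0 ≤ ε → ε ≤ εmax → ∀ ω : ℝ, 1 ≤ ω →
    (∀ ξ : ℝ, ftR f ξ = 0 → ε ≤ |ω - ξ|) →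
    L * supNormR f * ε ≤ ‖o ω‖
  osc_deriv_lower : ∀ ε : ℝ, 0 ≤ ε → ε ≤ εmax → ∀ ω : ℝ, 1 ≤ ω →
    (∃ ξ : ℝ, ftR f ξ = 0 ∧ |ω - ξ| ≤ ε) →
    B * supNormR f ≤ ‖deriv o ω‖

noncomputable def gk (f : ℝ → ℝ) (k : ℕ) (ω : ℝ) : ℂ :=
  ∫ t : ℝ, (-Complex.I * t) ^ k * (f t : ℂ) * Complex.exp (-Complex.I * t * ω)

variable {f : ℝ → ℝ} {s : ℝ}

lemma integrand_norm_le (hs0 : 0 ≤ s) (hfs : ∀ t, |f t| ≤ s)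
    (hsupp : ∀ t : ℝ, t ∉ Set.Icc (-(1/2) : ℝ) (1/2 : ℝ) → f t = 0) (k : ℕ) (ω t : ℝ) :
    ‖(-Complex.I * t) ^ k * (f t : ℂ) * Complex.exp (-Complex.I * t * ω)‖ ≤
      Set.indicator (Set.Icc (-(1/2):ℝ) (1/2)) (fun _ => s) t := by
  by_cases ht : t ∈ Set.Icc (-(1/2):ℝ) (1/2)
  · rw [Set.indicator_of_mem ht]
    have h1 : ‖Complex.exp (-Complex.I * t * ω)‖ = 1 := by
      have h : -Complex.I * t * ω = ((-(t*ω) : ℝ) : ℂ) * Complex.I := by push_cast; ring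
      rw [h, Complex.norm_exp_ofReal_mul_I]
    have h2 : ‖(-Complex.I * (t:ℂ)) ^ k‖ ≤ 1 := by
      rw [norm_pow]
      apply pow_le_one₀ (norm_nonneg _)
      rw [norm_mul]
      simp only [norm_neg, Complex.norm_I, one_mul, Complex.norm_real, Real.norm_eq_abs]
      rw [abs_le]; constructor <;> [linarith [ht.1]; linarith [ht.2]]
    calc ‖(-Complex.I * t) ^ k * (f t : ℂ) * Complex.exp (-Complex.I * t * ω)‖
        = ‖(-Complex.I * (t:ℂ)) ^ k‖ * ‖((f t : ℝ):ℂ)‖ * ‖Complex.exp (-Complex.I * t * ω)‖ := by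
          rw [norm_mul, norm_mul]
      _ ≤ 1 * s * 1 := by
          apply mul_le_mul (mul_le_mul h2 (by simpa using hfs t) (norm_nonneg _) zero_le_one)
            (le_of_eq h1) (norm_nonneg _) (by simpa using hs0)
      _ = s := by ring
  · rw [Set.indicator_of_notMem ht, hsupp t ht]
    simp

lemma bound_integrable (hs0 : 0 ≤ s) :
    Integrable (Set.indicator (Set.Icc (-(1/2):ℝ) (1/2)) (fun _ => s)) volume := by
  rw [integrable_indicator_iff measurableSet_Icc]
  exact integrableOn_const measure_Icc_lt_top.ne

lemma bound_integral : ∫ t : ℝ, Set.indicator (Set.Icc (-(1/2):ℝ) (1/2)) (fun _ => s) t = s := by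
  rw [integral_indicator_const s measurableSet_Icc, Real.volume_real_Icc]
  norm_num

lemma integrand_meas (hf : Measurable f) (k : ℕ) (ω : ℝ) :
    AEStronglyMeasurable (fun t : ℝ => (-Complex.I * t) ^ k * (f t : ℂ) *
      Complex.exp (-Complex.I * t * ω)) volume := by
  apply Measurable.aestronglyMeasurable
  apply Measurable.mul
  · exact (((Complex.measurable_ofReal.const_mul (-Complex.I)).pow_const k).mul
      (Complex.measurable_ofReal.comp hf))
  · exact Complex.measurable_exp.comp ((Complex.measurable_ofReal.const_mul (-Complex.I)).mul_const _)

lemma gk_integrable (hf : Measurable f) (hs0 : 0 ≤ s) (hfs : ∀ t, |f t| ≤ s)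
    (hsupp : ∀ t : ℝ, t ∉ Set.Icc (-(1/2) : ℝ) (1/2 : ℝ) → f t = 0) (k : ℕ) (ω : ℝ) :
    Integrable (fun t : ℝ => (-Complex.I * t) ^ k * (f t : ℂ) *
      Complex.exp (-Complex.I * t * ω)) volume :=
  (bound_integrable hs0).mono' (integrand_meas hf k ω)
    (Filter.Eventually.of_forall (integrand_norm_le hs0 hfs hsupp k ω))

lemma gk_hasDerivAt (hf : Measurable f) (hs0 : 0 ≤ s) (hfs : ∀ t, |f t| ≤ s)
    (hsupp : ∀ t : ℝ, t ∉ Set.Icc (-(1/2) : ℝ) (1/2 : ℝ) → f t = 0) (k : ℕ) (ω : ℝ) :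
    HasDerivAt (gk f k) (gk f (k+1) ω) ω := by
  have key := hasDerivAt_integral_of_dominated_loc_of_deriv_le
    (F := fun (x : ℝ) (t : ℝ) => (-Complex.I * t) ^ k * (f t : ℂ) * Complex.exp (-Complex.I * t * x))
    (F' := fun (x : ℝ) (t : ℝ) => (-Complex.I * t) ^ (k+1) * (f t : ℂ) * Complex.exp (-Complex.I * t * x))
    (bound := Set.indicator (Set.Icc (-(1/2):ℝ) (1/2)) (fun _ => s)) (x₀ := ω)
    (Metric.ball_mem_nhds ω one_pos)
    (Filter.Eventually.of_forall fun x => integrand_meas hf k x)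
    (gk_integrable hf hs0 hfs hsupp k ω)
    (integrand_meas hf (k+1) ω)
    (Filter.Eventually.of_forall fun t => fun x _ => integrand_norm_le hs0 hfs hsupp (k+1) x t)
    (bound_integrable hs0)
    (Filter.Eventually.of_forall fun t => fun x _ => by
      have h0 : HasDerivAt (fun y : ℝ => ((y : ℂ))) 1 x := Complex.ofRealCLM.hasDerivAt
      have h1 : HasDerivAt (fun y : ℝ => (-Complex.I * t) * (y : ℂ)) (-Complex.I * t) x := by
        simpa using h0.const_mul (-Complex.I * (t:ℂ))
      have h2 := h1.cexp
      have h3 := h2.const_mul ((-Complex.I * t) ^ k * (f t : ℂ))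
      refine h3.congr_deriv ?_
      ring)
  exact key.2

lemma gk_zero' (f : ℝ → ℝ) : gk f 0 = ftR f := by
  funext ω; unfold gk ftR; simp

lemma gk_norm_le (hf : Measurable f) (hs0 : 0 ≤ s) (hfs : ∀ t, |f t| ≤ s)
    (hsupp : ∀ t : ℝ, t ∉ Set.Icc (-(1/2) : ℝ) (1/2 : ℝ) → f t = 0) (k : ℕ) (ω : ℝ) :
    ‖gk f k ω‖ ≤ s := by
  calc ‖gk f k ω‖ ≤ ∫ t : ℝ, Set.indicator (Set.Icc (-(1/2):ℝ) (1/2)) (fun _ => s) t :=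
        norm_integral_le_of_norm_le (bound_integrable hs0)
          (Filter.Eventually.of_forall (integrand_norm_le hs0 hfs hsupp k ω))
    _ = s := bound_integral

lemma abs_comb_le {a b c d s : ℝ} (ha : |a| ≤ s^2) (hb : |b| ≤ s^2) (hc : |c| ≤ s^2)
    (hd : |d| ≤ s^2) : |2*(3*a + b + 3*c + d)| ≤ 16*s^2 := by
  have ha' := abs_le.1 ha; have hb' := abs_le.1 hb
  have hc' := abs_le.1 hc; have hd' := abs_le.1 hd
  rw [abs_le]; constructor <;> [linarith [ha'.1]; linarith [ha'.2]]

lemma abs_mul_le_sq {a b s : ℝ} (hs : 0 ≤ s) (ha : |a| ≤ s) (hb : |b| ≤ s) : |a*b| ≤ s^2 := by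
  rw [abs_mul, sq]
  exact mul_le_mul ha hb (abs_nonneg b) hs


set_option maxHeartbeats 1000000 in
/-- **Lower bound on `P''` near the zeros.** Under the vanishing model, there are
constants `c₀, c₁ > 0` depending only on `β, C, B` such that for every `h ∈ (0,1)`,
every `ε̌ ∈ [0, min(ε_max, c₀ h^{2β})]` and every `ω ∈ [0, h⁻¹]` within `ε̌` of a zero
`ξ` of `f^ft` with `[ξ - ε̌, ξ + ε̌] ⊆ [0, h⁻¹]`, one has
`|P''(ω)| ≥ c₁ h^{2β} ‖f‖_∞²`. -/
theorem power_spectrum_second_deriv_lower_bound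
    (β C B : ℝ) (hβ : 1 ≤ β) (hC : 0 < C) (hB : 0 < B) :
    ∃ c₀ : ℝ, 0 < c₀ ∧ ∃ c₁ : ℝ, 0 < c₁ ∧
      ∀ (f : ℝ → ℝ) (o : ℝ → ℂ) (L εmax : ℝ),
        VanishingModel f o β C L B εmax →
        ∀ h : ℝ, 0 < h → h < 1 →
        ∀ εcheck : ℝ, 0 ≤ εcheck → εcheck ≤ min εmax (c₀ * h ^ (2 * β)) →
        ∀ ω ∈ Set.Icc (0 : ℝ) h⁻¹,
          (∃ ξ : ℝ, ftR f ξ = 0 ∧ |ω - ξ| ≤ εcheck ∧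
            Set.Icc (ξ - εcheck) (ξ + εcheck) ⊆ Set.Icc (0 : ℝ) h⁻¹) →
          c₁ * h ^ (2 * β) * supNormR f ^ 2 ≤ |iteratedDeriv 2 (powerSpec f) ω| := by
  refine ⟨min (1/2) (B^2/16), by positivity, B^2, by positivity, ?_⟩
  intro f o L εmax vm h hh hh1 εc hεc0 hεcle ω hω hex
  obtain ⟨ξ, hξ0, hωξ, hsub⟩ := hex
  set s : ℝ := supNormR f with hs_def
  -- basic facts about s
  obtain ⟨M, hM⟩ := vm.f_bdd
  have hbdd : BddAbove (Set.range fun t => |f t|) := ⟨M, by rintro _ ⟨t, rfl⟩; exact hM t⟩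
  have hfs : ∀ t, |f t| ≤ s := fun t => le_csSup hbdd ⟨t, rfl⟩
  have hs0 : 0 ≤ s := le_trans (abs_nonneg (f 0)) (hfs 0)
  have hf := vm.f_meas
  have hsupp := vm.f_supp
  -- derivative chain for gk
  have hD : ∀ (k : ℕ) (x : ℝ), HasDerivAt (gk f k) (gk f (k+1) x) x :=
    fun k x => gk_hasDerivAt hf hs0 hfs hsupp k x
  have hDre : ∀ (k : ℕ) (x : ℝ),
      HasDerivAt (fun y => (gk f k y).re) ((gk f (k+1) x).re) x :=
    fun k x => Complex.reCLM.hasFDerivAt.comp_hasDerivAt x (hD k x)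
  have hDim : ∀ (k : ℕ) (x : ℝ),
      HasDerivAt (fun y => (gk f k y).im) ((gk f (k+1) x).im) x :=
    fun k x => Complex.imCLM.hasFDerivAt.comp_hasDerivAt x (hD k x)
  have hUb : ∀ (k : ℕ) (x : ℝ), |(gk f k x).re| ≤ s :=
    fun k x => le_trans (Complex.abs_re_le_norm _) (gk_norm_le hf hs0 hfs hsupp k x)
  have hWb : ∀ (k : ℕ) (x : ℝ), |(gk f k x).im| ≤ s :=
    fun k x => le_trans (Complex.abs_im_le_norm _) (gk_norm_le hf hs0 hfs hsupp k x)
  -- power spectrum and its derivatives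
  set Q1 : ℝ → ℝ := fun x => 2*((gk f 0 x).re*(gk f 1 x).re + (gk f 0 x).im*(gk f 1 x).im)
    with hQ1_def
  set Q2 : ℝ → ℝ := fun x => 2*((gk f 1 x).re*(gk f 1 x).re + (gk f 0 x).re*(gk f 2 x).re
    + (gk f 1 x).im*(gk f 1 x).im + (gk f 0 x).im*(gk f 2 x).im) with hQ2_def
  set Q3 : ℝ → ℝ := fun x => 2*(3*((gk f 1 x).re*(gk f 2 x).re) + (gk f 0 x).re*(gk f 3 x).re
    + 3*((gk f 1 x).im*(gk f 2 x).im) + (gk f 0 x).im*(gk f 3 x).im) with hQ3_def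
  have hPfun : powerSpec f = fun x => (gk f 0 x).re*(gk f 0 x).re + (gk f 0 x).im*(gk f 0 x).im := by
    funext x
    have h1 : ‖ftR f x‖ ^ 2 = (ftR f x).re*(ftR f x).re + (ftR f x).im*(ftR f x).im := by
      rw [Complex.sq_norm, Complex.normSq_apply]
    simp only [powerSpec, h1, gk_zero']
  have hP' : ∀ x, HasDerivAt (powerSpec f) (Q1 x) x := by
    intro x
    rw [hPfun]
    have := ((hDre 0 x).mul (hDre 0 x)).add ((hDim 0 x).mul (hDim 0 x))
    refine this.congr_deriv ?_
    (try simp only [hQ1_def]); ring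
  have hQ1' : ∀ x, HasDerivAt Q1 (Q2 x) x := by
    intro x
    have := (((hDre 0 x).mul (hDre 1 x)).add ((hDim 0 x).mul (hDim 1 x))).const_mul (2:ℝ)
    refine this.congr_deriv ?_
    (try simp only [hQ2_def]); ring
  have hQ2' : ∀ x, HasDerivAt Q2 (Q3 x) x := by
    intro x
    have := (((((hDre 1 x).mul (hDre 1 x)).add ((hDre 0 x).mul (hDre 2 x))).add
      ((hDim 1 x).mul (hDim 1 x))).add ((hDim 0 x).mul (hDim 2 x))).const_mul (2:ℝ)
    refine this.congr_deriv ?_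
    (try simp only [hQ3_def]); ring
  have hiter : iteratedDeriv 2 (powerSpec f) ω = Q2 ω := by
    have hd1 : deriv (powerSpec f) = Q1 := funext fun x => (hP' x).deriv
    rw [show (2:ℕ) = 1 + 1 from rfl, iteratedDeriv_succ, iteratedDeriv_one, hd1, (hQ1' ω).deriv]
  have hQ3b : ∀ x, |Q3 x| ≤ 16*s^2 := fun x =>
    abs_comb_le (abs_mul_le_sq hs0 (hUb 1 x) (hUb 2 x)) (abs_mul_le_sq hs0 (hUb 0 x) (hUb 3 x))
      (abs_mul_le_sq hs0 (hWb 1 x) (hWb 2 x)) (abs_mul_le_sq hs0 (hWb 0 x) (hWb 3 x))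
  have hMVT : |Q2 ω - Q2 ξ| ≤ 16*s^2*|ω - ξ| := by
    have := Convex.norm_image_sub_le_of_norm_hasDerivWithin_le (f := Q2) (f' := Q3)
      (s := Set.univ) (fun x _ => (hQ2' x).hasDerivWithinAt) (fun x _ => hQ3b x)
      convex_univ (Set.mem_univ ξ) (Set.mem_univ ω)
    simpa [Real.norm_eq_abs] using this
  -- facts about ξ
  have h2βpos : (0:ℝ) < 2*β := by linarith
  have hpow1 : h ^ (2*β) ≤ 1 := Real.rpow_le_one hh.le hh1.le h2βpos.le
  have hεchalf : εc ≤ 1/2 := by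
    have h1 : εc ≤ min (1/2) (B^2/16) * h ^ (2*β) := le_trans hεcle (min_le_right _ _)
    have h2 : min (1/2) (B^2/16) * h ^ (2*β) ≤ (1/2) * 1 :=
      mul_le_mul (min_le_left _ _) hpow1 (Real.rpow_nonneg hh.le _) (by norm_num)
    linarith
  have hξgt1 : 1 < ξ := by
    by_contra hle
    push_neg at hle
    refine vm.nonvanishing ξ ?_ hξ0
    have h1 := abs_le.1 hωξ
    rw [abs_le]
    constructor
    · linarith [hω.1]
    · exact hle
  have hξpos : (0:ℝ) < ξ := by linarith
  have hξle : ξ ≤ h⁻¹ := by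
    have := hsub ⟨by linarith, by linarith⟩
    exact this.2
  have hrp : (0:ℝ) < ξ ^ (-β) := Real.rpow_pos_of_pos hξpos _
  have hoξ : o ξ = 0 := by
    have hdec := vm.decomposition ξ hξgt1.le
    rw [hξ0] at hdec
    rcases mul_eq_zero.1 hdec.symm with h' | h'
    · exact h'
    · exact absurd (Complex.ofReal_eq_zero.1 h') (ne_of_gt hrp)
  have hderiv_g : HasDerivAt (ftR f) (deriv o ξ * ((ξ ^ (-β) : ℝ) : ℂ)) ξ := by
    have ho : HasDerivAt o (deriv o ξ) ξ := (vm.o_diff ξ).hasDerivAt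
    have hr : HasDerivAt (fun x : ℝ => x ^ (-β)) (-β * ξ ^ (-β - 1)) ξ :=
      Real.hasDerivAt_rpow_const (Or.inl (ne_of_gt hξpos))
    have hprod := ho.mul hr.ofReal_comp
    rw [hoξ, zero_mul, add_zero] at hprod
    have hEv : ftR f =ᶠ[nhds ξ] fun x => o x * ((x ^ (-β) : ℝ) : ℂ) := by
      filter_upwards [Ioi_mem_nhds hξgt1] with x hx
      exact vm.decomposition x hx.le
    exact hprod.congr_of_eventuallyEq hEv
  have hg1ξ : gk f 1 ξ = deriv o ξ * ((ξ ^ (-β) : ℝ) : ℂ) := by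
    have h1 := hD 0 ξ
    rw [gk_zero'] at h1
    exact h1.unique hderiv_g
  have hBs : B * s ≤ ‖deriv o ξ‖ :=
    vm.osc_deriv_lower 0 le_rfl vm.eps_pos.le ξ hξgt1.le ⟨ξ, hξ0, by simp⟩
  have hnorm1 : B * s * ξ^(-β) ≤ ‖gk f 1 ξ‖ := by
    rw [hg1ξ, norm_mul, Complex.norm_real, Real.norm_eq_abs, abs_of_pos hrp]
    exact mul_le_mul_of_nonneg_right (by exact hBs) hrp.le
  have hhβ : h^β ≤ ξ^(-β) := by
    have h1 : (h⁻¹ : ℝ) ^ (-β) ≤ ξ ^ (-β) :=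
      Real.rpow_le_rpow_of_nonpos hξpos hξle (by linarith)
    have h2 : (h⁻¹:ℝ) ^ (-β) = h ^ β := by
      rw [Real.rpow_neg (inv_nonneg.2 hh.le), Real.inv_rpow hh.le, inv_inv]
    rw [h2] at h1
    exact h1
  have hnorm2 : B * s * h^β ≤ ‖gk f 1 ξ‖ :=
    le_trans (mul_le_mul_of_nonneg_left hhβ (by positivity)) hnorm1
  have hsq : (B*s*h^β)^2 ≤ ‖gk f 1 ξ‖^2 := by
    apply pow_le_pow_left₀ (by positivity) hnorm2
  have hA : (h^β)^2 = h^(2*β) := by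
    rw [two_mul, Real.rpow_add hh]; ring
  have hQ2ξ : Q2 ξ = 2*‖gk f 1 ξ‖^2 := by
    have h0re : (gk f 0 ξ).re = 0 := by rw [gk_zero', hξ0]; simp
    have h0im : (gk f 0 ξ).im = 0 := by rw [gk_zero', hξ0]; simp
    have hn : ‖gk f 1 ξ‖^2 = (gk f 1 ξ).re*(gk f 1 ξ).re + (gk f 1 ξ).im*(gk f 1 ξ).im := by
      rw [Complex.sq_norm, Complex.normSq_apply]
    simp only [hQ2_def, h0re, h0im, hn]; ring
  have hQ2ξ_lb : 2*B^2*s^2*h^(2*β) ≤ Q2 ξ := by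
    have h1 : (B*s*h^β)^2 = B^2*s^2*h^(2*β) := by rw [← hA]; ring
    rw [hQ2ξ]
    nlinarith [hsq]
  -- conclude
  rw [hiter]
  have hεc2 : εc ≤ (B^2/16) * h^(2*β) := by
    have h1 : εc ≤ min (1/2) (B^2/16) * h ^ (2*β) := le_trans hεcle (min_le_right _ _)
    have h2 : min (1/2) (B^2/16) * h ^ (2*β) ≤ (B^2/16) * h^(2*β) :=
      mul_le_mul_of_nonneg_right (min_le_right _ _) (Real.rpow_nonneg hh.le _)
    linarith
  have h3 : 16*s^2*|ω - ξ| ≤ 16*s^2*((B^2/16)*h^(2*β)) :=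
    mul_le_mul_of_nonneg_left (le_trans hωξ hεc2) (by positivity)
  have h4 : Q2 ξ - Q2 ω ≤ |Q2 ω - Q2 ξ| := by
    rw [abs_sub_comm]
    exact le_abs_self _
  have h5 : Q2 ω ≤ |Q2 ω| := le_abs_self _
  nlinarith [hQ2ξ_lb, hMVT, h3, h4, h5]
end
end
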